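/- arXiv:2402.00062 — 10 statements merged into one kernel-verified Lean document; each statement's English description precedes it below -/
import Mathlib

section
/- Let f : [0,1] → ℝ be continuously differentiable, let ω, ω′ ∈ [0,1/2) with ω ≤ ω′, and let a > 0 be such that A := a/(1 − 2(ω′ − ω)) < 1. Then ∫₀¹ (1−t)^{2ω} f(t)² dt ≤ sup_{t∈[0,1]} ((1−t)^{ω} f(t))² ≤ (1/(1−A)) f(0)² + (1/(a(1−A))) ∫₀¹ (1−t)^{2ω′} f′(t)² dt. -/
open Real Set MeasureTheory

lemma my_sq_rpow (x : ℝ) (hx : 0 ≤ x) (y : ℝ) : (x ^ y) ^ 2 = x ^ (2 * y) := by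
  rw [mul_comm, Real.rpow_mul hx, ← Real.rpow_natCast (x ^ y) 2]
  norm_num

lemma my_cauchy_schwarz {α : Type*} [MeasurableSpace α] {μ : Measure α}
    {p q : α → ℝ} (hpm : AEStronglyMeasurable p μ) (hqm : AEStronglyMeasurable q μ)
    (hp : Integrable (fun x => p x ^ 2) μ) (hq : Integrable (fun x => q x ^ 2) μ) :
    (∫ x, p x * q x ∂μ) ^ 2 ≤ (∫ x, p x ^ 2 ∂μ) * ∫ x, q x ^ 2 ∂μ := by
  have hpq : Integrable (fun x => p x * q x) μ := by
    refine (hp.add hq).mono' (hpm.mul hqm) (Filter.Eventually.of_forall fun x => ?_)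
    simp only [Pi.add_apply, Real.norm_eq_abs]
    rcases abs_cases (p x * q x) with ⟨h, -⟩ | ⟨h, -⟩ <;> rw [h] <;>
      nlinarith [sq_nonneg (p x - q x), sq_nonneg (p x + q x)]
  set B := ∫ x, p x * q x ∂μ with hB
  set P := ∫ x, p x ^ 2 ∂μ with hP
  set Q := ∫ x, q x ^ 2 ∂μ with hQ
  have key : ∀ l : ℝ, 0 ≤ Q * (l * l) + (-(2 * B)) * l + P := by
    intro l
    have h0 : 0 ≤ ∫ x, (p x - l * q x) ^ 2 ∂μ := integral_nonneg fun x => sq_nonneg _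
    have heq : ∫ x, (p x - l * q x) ^ 2 ∂μ = P - 2 * l * B + l ^ 2 * Q := by
      have hfun : (fun x => (p x - l * q x) ^ 2)
          = fun x => (p x ^ 2 - 2 * l * (p x * q x)) + l ^ 2 * q x ^ 2 := by
        funext x; ring
      have h1 : Integrable (fun x => p x ^ 2 - 2 * l * (p x * q x)) μ := by
        exact hp.sub (hpq.const_mul _)
      have h2 : Integrable (fun x => l ^ 2 * q x ^ 2) μ := hq.const_mul _
      have h3 : Integrable (fun x => 2 * l * (p x * q x)) μ := hpq.const_mul _
      rw [hfun, integral_add h1 h2, integral_sub hp h3, MeasureTheory.integral_const_mul, MeasureTheory.integral_const_mul]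
    nlinarith [h0, heq]
  have hd := discrim_le_zero key
  rw [discrim] at hd
  nlinarith [hd]

set_option maxHeartbeats 2000000 in
/-- Basic one-dimensional integral estimate (Lemma 4.1):
`∫₀¹ (1−t)^{2ω} f(t)² dt ≤ sup_{t∈[0,1]} ((1−t)^ω f(t))²
  ≤ (1/(1−A)) f(0)² + (1/(a(1−A))) ∫₀¹ (1−t)^{2ω′} f′(t)² dt`
where `A = a/(1 − 2(ω′−ω))`. -/
theorem stmt0 (f f' : ℝ → ℝ) (ω ω' a : ℝ)
    (hf : ∀ t ∈ Set.Icc (0:ℝ) 1, HasDerivWithinAt f (f' t) (Set.Icc (0:ℝ) 1) t)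
    (hf' : ContinuousOn f' (Set.Icc (0:ℝ) 1))
    (hω : ω ∈ Set.Ico (0:ℝ) (1/2)) (hω' : ω' ∈ Set.Ico (0:ℝ) (1/2))
    (hle : ω ≤ ω') (ha : 0 < a)
    (hA : a / (1 - 2 * (ω' - ω)) < 1) :
    (∫ t in (0:ℝ)..1, (1 - t) ^ (2 * ω) * f t ^ 2)
      ≤ (⨆ t : Set.Icc (0:ℝ) 1, ((1 - (t : ℝ)) ^ ω * f (t : ℝ)) ^ 2) ∧
    (⨆ t : Set.Icc (0:ℝ) 1, ((1 - (t : ℝ)) ^ ω * f (t : ℝ)) ^ 2)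
      ≤ (1 / (1 - a / (1 - 2 * (ω' - ω)))) * f 0 ^ 2
        + (1 / (a * (1 - a / (1 - 2 * (ω' - ω)))))
          * ∫ t in (0:ℝ)..1, (1 - t) ^ (2 * ω') * f' t ^ 2 := by
  obtain ⟨hω0, hω2⟩ := hω
  obtain ⟨hω'0, hω'2⟩ := hω'
  set c : ℝ := 1 - 2 * (ω' - ω) with hc
  have hc0 : 0 < c := by simp only [hc]; linarith
  set A : ℝ := a / c with hAdef
  have hA0 : 0 < A := div_pos ha hc0
  have h1A : 0 < 1 - A := by linarith
  have hcA : c * A = a := by rw [hAdef]; field_simp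
  -- continuity facts
  have hfc : ContinuousOn f (Icc 0 1) := fun t ht => (hf t ht).continuousWithinAt
  have hwcont : Continuous fun t : ℝ => (1 - t) ^ ω :=
    (continuous_const.sub continuous_id).rpow_const (fun x => Or.inr hω0)
  have hw'cont : Continuous fun t : ℝ => (1 - t) ^ ω' :=
    (continuous_const.sub continuous_id).rpow_const (fun x => Or.inr hω'0)
  set G : ℝ → ℝ := fun t => ((1 - t) ^ ω * f t) ^ 2 with hGdef
  have hGc : ContinuousOn G (Icc 0 1) := (hwcont.continuousOn.mul hfc).pow 2
  -- boundedness of the sup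
  have hbdd : BddAbove (Set.range fun t : Icc (0:ℝ) 1 => G t) := by
    have h1 : Set.range (fun t : Icc (0:ℝ) 1 => G t) = G '' Icc 0 1 := by
      rw [show (fun t : Icc (0:ℝ) 1 => G ↑t) = G ∘ Subtype.val from rfl, Set.range_comp,
        Subtype.range_coe]
    rw [h1]
    exact (isCompact_Icc.image_of_continuousOn hGc).bddAbove
  set S := ⨆ t : Icc (0:ℝ) 1, G t with hSdef
  have hGS : ∀ t ∈ Icc (0:ℝ) 1, G t ≤ S := fun t ht => le_ciSup hbdd ⟨t, ht⟩
  -- Part 1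
  have heqG : ∀ t ∈ uIcc (0:ℝ) 1, (1 - t) ^ (2 * ω) * f t ^ 2 = G t := by
    intro t ht
    rw [uIcc_of_le zero_le_one] at ht
    have h1t : (0:ℝ) ≤ 1 - t := by linarith [ht.2]
    rw [hGdef]
    simp only
    rw [mul_pow, my_sq_rpow _ h1t]
  have part1 : (∫ t in (0:ℝ)..1, (1 - t) ^ (2 * ω) * f t ^ 2) ≤ S := by
    rw [intervalIntegral.integral_congr heqG]
    calc (∫ t in (0:ℝ)..1, G t) ≤ ∫ _t in (0:ℝ)..1, S := by
          apply intervalIntegral.integral_mono_on zero_le_one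
            (hGc.intervalIntegrable_of_Icc zero_le_one) intervalIntegrable_const
          exact hGS
      _ = S := by simp
  -- setup for Part 2
  set q : ℝ → ℝ := fun s => (1 - s) ^ ω' * f' s with hqdef
  have hqcont : ContinuousOn q (Icc 0 1) := hw'cont.continuousOn.mul hf'
  have hq2int : IntegrableOn (fun s => q s ^ 2) (Ioc 0 1) :=
    ((hqcont.pow 2).integrableOn_Icc).mono_set Ioc_subset_Icc_self
  set I := ∫ s in Ioc (0:ℝ) 1, q s ^ 2 with hIdef
  have hIeq : (∫ s in (0:ℝ)..1, (1 - s) ^ (2 * ω') * f' s ^ 2) = I := by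
    rw [intervalIntegral.integral_of_le zero_le_one]
    apply setIntegral_congr_fun measurableSet_Ioc
    intro s hs
    have h1s : (0:ℝ) ≤ 1 - s := by linarith [hs.2]
    simp only [hqdef]
    rw [mul_pow, my_sq_rpow _ h1s]
  have hI0 : 0 ≤ I := setIntegral_nonneg measurableSet_Ioc fun s _ => sq_nonneg _
  have hone : ∀ᵐ s : ℝ, s ≠ (1:ℝ) := by
    have hm : volume ({(1:ℝ)} : Set ℝ) = 0 := measure_singleton 1
    rw [ae_iff]
    convert hm using 2
    ext s; simp [not_not]
  refine ⟨part1, ciSup_le ?_⟩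
  rintro ⟨t, ht⟩
  show ((1 - t) ^ ω * f t) ^ 2 ≤ 1 / (1 - A) * f 0 ^ 2 + 1 / (a * (1 - A)) * _
  rw [hIeq]
  -- FTC
  have hsub : Icc (0:ℝ) t ⊆ Icc 0 1 := Icc_subset_Icc le_rfl ht.2
  have hf'int : IntervalIntegrable f' volume 0 t :=
    (hf'.mono hsub).intervalIntegrable_of_Icc ht.1
  have hftc : ∫ s in (0:ℝ)..t, f' s = f t - f 0 := by
    apply intervalIntegral.integral_eq_sub_of_hasDeriv_right_of_le ht.1 (hfc.mono hsub) ?_ hf'int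
    intro x hx
    exact (hf x ⟨hx.1.le, hx.2.le.trans ht.2⟩).mono_of_mem_nhdsWithin
      (Icc_mem_nhdsGT_of_mem ⟨hx.1.le, lt_of_lt_of_le hx.2 ht.2⟩)
  set w : ℝ := (1 - t) ^ ω with hwdef
  have h1t : (0:ℝ) ≤ 1 - t := by linarith [ht.2]
  have hw0 : 0 ≤ w := Real.rpow_nonneg h1t _
  have hw1 : w ≤ 1 := Real.rpow_le_one h1t (by linarith [ht.1]) hω0
  set u : ℝ := w * f 0 with hudef
  set B : ℝ := w * ∫ s in (0:ℝ)..t, f' s with hBdef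
  have hgoalG : w * f t = u + B := by
    rw [hudef, hBdef, hftc]; ring
  -- Cauchy-Schwarz setup
  set P : ℝ → ℝ := fun s => w * ((1 - s) ^ ω')⁻¹ with hPdef
  have hPm : AEStronglyMeasurable P (volume.restrict (Ioc 0 t)) :=
    ((hw'cont.measurable.inv.const_mul w)).aestronglyMeasurable
  have hqm : AEStronglyMeasurable q (volume.restrict (Ioc 0 t)) :=
    (hqcont.mono ((Ioc_subset_Icc_self).trans hsub)).aestronglyMeasurable measurableSet_Ioc
  have hBP : B = ∫ s in Ioc (0:ℝ) t, P s * q s := by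
    rw [hBdef, ← intervalIntegral.integral_const_mul, intervalIntegral.integral_of_le ht.1]
    apply setIntegral_congr_ae measurableSet_Ioc
    filter_upwards [hone] with s hs1 hs
    have h1s : 0 < 1 - s :=
      lt_of_le_of_ne (by linarith [hs.2, ht.2]) fun h => hs1 (by linarith)
    have hne : (1 - s) ^ ω' ≠ 0 := ne_of_gt (Real.rpow_pos_of_pos h1s _)
    simp only [hPdef, hqdef]
    field_simp
  have hrint : ∀ r : ℝ, -1 < r → IntegrableOn (fun s : ℝ => (1 - s) ^ r) (Ioc 0 t) := by
    intro r hr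
    have h := intervalIntegral.intervalIntegrable_rpow' (a := 1 - t) (b := 1) hr
    have h2 := h.comp_sub_left 1
    simp only [sub_sub_cancel, sub_self] at h2
    have h3 := h2.symm
    rwa [intervalIntegrable_iff_integrableOn_Ioc_of_le ht.1] at h3
  have hP2int : IntegrableOn (fun s => P s ^ 2) (Ioc 0 t) := by
    have hbase : IntegrableOn (fun s : ℝ => w ^ 2 * (1 - s) ^ (-(2 * ω'))) (Ioc 0 t) :=
      (hrint _ (by linarith)).const_mul _
    apply hbase.congr_fun ?_ measurableSet_Ioc
    intro s hs
    have h1s : (0:ℝ) ≤ 1 - s := by linarith [hs.2, ht.2]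
    simp only [hPdef]
    rw [mul_pow, inv_pow, my_sq_rpow _ h1s, ← Real.rpow_neg h1s]
  have hq2int' : IntegrableOn (fun s => q s ^ 2) (Ioc 0 t) :=
    hq2int.mono_set (Ioc_subset_Ioc_right ht.2)
  have hcs := my_cauchy_schwarz hPm hqm hP2int hq2int'
  have hY0 : 0 ≤ ∫ s in Ioc (0:ℝ) t, q s ^ 2 :=
    setIntegral_nonneg measurableSet_Ioc fun _ _ => sq_nonneg _
  -- bound on ∫ P²
  have hXle : (∫ s in Ioc (0:ℝ) t, P s ^ 2) ≤ 1 / c := by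
    have hmono : (∫ s in Ioc (0:ℝ) t, P s ^ 2)
        ≤ ∫ s in Ioc (0:ℝ) t, (1 - s) ^ (-(2 * (ω' - ω))) := by
      apply setIntegral_mono_on hP2int (hrint _ (by linarith)) measurableSet_Ioc
      intro s hs
      have h1s : (0:ℝ) ≤ 1 - s := by linarith [hs.2, ht.2]
      rcases eq_or_lt_of_le h1s with heq | hlt
      · rcases eq_or_lt_of_le hω'0 with hω'eq | hω'pos
        · have hωeq : ω = 0 := le_antisymm (hle.trans hω'eq.symm.le) hω0
          simp only [hPdef, hwdef, ← heq, hωeq, ← hω'eq]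
          norm_num
        · have hL : P s ^ 2 = 0 := by
            simp [hPdef, ← heq, Real.zero_rpow (ne_of_gt hω'pos)]
          rw [hL]
          exact Real.rpow_nonneg h1s _
      · have hw2 : w ^ 2 ≤ (1 - s) ^ (2 * ω) := by
          rw [hwdef, my_sq_rpow _ h1t]
          exact Real.rpow_le_rpow h1t (by linarith [hs.2]) (by linarith)
        have hPs : P s ^ 2 = w ^ 2 * (1 - s) ^ (-(2 * ω')) := by
          simp only [hPdef]
          rw [mul_pow, inv_pow, my_sq_rpow _ hlt.le, ← Real.rpow_neg hlt.le]
        rw [hPs]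
        calc w ^ 2 * (1 - s) ^ (-(2 * ω'))
            ≤ (1 - s) ^ (2 * ω) * (1 - s) ^ (-(2 * ω')) :=
              mul_le_mul_of_nonneg_right hw2 (Real.rpow_nonneg hlt.le _)
          _ = (1 - s) ^ (-(2 * (ω' - ω))) := by
              rw [← Real.rpow_add hlt]; ring_nf
    refine hmono.trans ?_
    rw [← intervalIntegral.integral_of_le ht.1]
    have hcomp := intervalIntegral.integral_comp_sub_left (a := 0) (b := t)
      (fun u : ℝ => u ^ (-(2 * (ω' - ω)))) 1
    simp only [sub_zero] at hcomp
    rw [hcomp, integral_rpow (Or.inl (by linarith))]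
    have hexp : -(2 * (ω' - ω)) + 1 = c := by rw [hc]; ring
    rw [hexp, Real.one_rpow]
    have hpow0 : 0 ≤ (1 - t) ^ c := Real.rpow_nonneg h1t _
    gcongr
    linarith
  -- bound on ∫ q²
  have hYle : (∫ s in Ioc (0:ℝ) t, q s ^ 2) ≤ I :=
    setIntegral_mono_set hq2int (Filter.Eventually.of_forall fun s => sq_nonneg _)
      ((Ioc_subset_Ioc_right ht.2).eventuallyLE)
  clear_value c A G S q I w u B P
  have hB2 : B ^ 2 ≤ (1 / c) * I := by
    rw [hBP]
    refine hcs.trans (mul_le_mul hXle hYle hY0 ?_)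
    positivity
  have haB2 : a * B ^ 2 ≤ A * I := by
    have hac : a * (1 / c) = A := by rw [hAdef]; field_simp
    calc a * B ^ 2 ≤ a * ((1 / c) * I) := by nlinarith [hB2, ha]
      _ = A * I := by rw [← hac]; ring
  have hu2 : u ^ 2 ≤ f 0 ^ 2 := by
    rw [hudef, mul_pow]
    have hw2 : w ^ 2 ≤ 1 := by nlinarith [hw0, hw1]
    exact mul_le_of_le_one_left (sq_nonneg _) hw2
  have h3 : A * a * u ^ 2 ≤ A * a * f 0 ^ 2 :=
    mul_le_mul_of_nonneg_left hu2 (by positivity)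
  have key2 : A * (a * ((1 - A) * (u + B) ^ 2)) ≤ A * (a * f 0 ^ 2 + I) := by
    have hid : A * (a * ((1 - A) * (u + B) ^ 2))
        = A * a * u ^ 2 + (a * B ^ 2 - A * (a * B ^ 2)) - a * (A * u - (1 - A) * B) ^ 2 := by
      ring
    have hE : 0 ≤ a * (A * u - (1 - A) * B) ^ 2 := mul_nonneg ha.le (sq_nonneg _)
    have hAB : 0 ≤ A * (a * B ^ 2) := mul_nonneg hA0.le (mul_nonneg ha.le (sq_nonneg _))
    have hrhs2 : A * (a * f 0 ^ 2 + I) = A * a * f 0 ^ 2 + A * I := by ring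
    linarith [haB2, h3]
  have key : a * ((1 - A) * (u + B) ^ 2) ≤ a * f 0 ^ 2 + I :=
    le_of_mul_le_mul_left key2 hA0
  rw [hgoalG]
  have hrhs : 1 / (1 - A) * f 0 ^ 2 + 1 / (a * (1 - A)) * I = (a * f 0 ^ 2 + I) / (a * (1 - A)) := by
    field_simp
  rw [hrhs, le_div_iff₀ (by positivity)]
  have hfin : (u + B) ^ 2 * (a * (1 - A)) = a * ((1 - A) * (u + B) ^ 2) := by ring
  linarith [key]
end

section
/- For every ẑ ∈ [-1,0] (writing t := |ẑ| = -ẑ ∈ [0,1] and |ẑ|^a := t^a with the convention 0^a = 0 for a > 0) the following four inequalities hold: (i) for every a ∈ (0,1): a(1−|ẑ|) ≤ 1−|ẑ|^a ≤ 1−|ẑ|; (ii) for every b ∈ (1/2,1): |(1−|ẑ|) − b⁻¹(1−|ẑ|^b)| ≤ 8(1−b)(1−|ẑ|)²; (iii) for every δ ∈ (0,1), every a ∈ (0,1) and every ẑ ∈ [-1,-δ]: 1−|ẑ|^a ≤ ((−ln δ)/(1−δ)) · a · (1−|ẑ|); (iv) for every δ₁ ∈ (0,1) there exists a constant c(δ₁)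 > 0 such that for all a ∈ (0,1) and all ẑ ∈ [-1,0]: |ẑ|^{δ₁}(1−|ẑ|^a) ≤ c(δ₁) · a. -/
open Real Set

lemma aux_le_rpow {t a : ℝ} (ht0 : 0 ≤ t) (ht1 : t ≤ 1) (ha0 : 0 < a) (ha1 : a ≤ 1) :
    t ≤ t ^ a := by
  rcases eq_or_lt_of_le ht0 with h | h
  · rw [← h, Real.zero_rpow ha0.ne']
  · have := Real.rpow_le_rpow_of_exponent_ge h ht1 ha1
    rwa [Real.rpow_one] at this

lemma aux_rpow_le {t a : ℝ} (ht0 : 0 ≤ t) (ha0 : 0 ≤ a) (ha1 : a ≤ 1) :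
    t ^ a ≤ 1 + a * (t - 1) := by
  have := rpow_one_add_le_one_add_mul_self (s := t - 1) (by linarith) ha0 ha1
  rwa [show (1:ℝ) + (t - 1) = t by ring] at this

lemma aux_one_sub_rpow {t a : ℝ} (ht0 : 0 < t) (ha0 : 0 ≤ a) :
    1 - t ^ a ≤ a * (-Real.log t) := by
  have h := Real.add_one_le_exp (Real.log t * a)
  rw [← Real.rpow_def_of_pos ht0] at h
  nlinarith [mul_comm (Real.log t) a]

/-- Elementary weight-comparison lemma (Lemma B.2): inequalities relating
`1 − |ẑ|^a` for different exponents `a` on `[-1,0]`, where `|ẑ| = −ẑ` and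
powers are real powers. -/
theorem stmt1 :
    (∀ z ∈ Set.Icc (-1:ℝ) 0, ∀ a ∈ Set.Ioo (0:ℝ) 1,
      a * (1 - (-z)) ≤ 1 - (-z) ^ a ∧ 1 - (-z) ^ a ≤ 1 - (-z)) ∧
    (∀ z ∈ Set.Icc (-1:ℝ) 0, ∀ b ∈ Set.Ioo (1/2:ℝ) 1,
      |(1 - (-z)) - b⁻¹ * (1 - (-z) ^ b)| ≤ 8 * (1 - b) * (1 - (-z)) ^ 2) ∧
    (∀ δ ∈ Set.Ioo (0:ℝ) 1, ∀ a ∈ Set.Ioo (0:ℝ) 1, ∀ z ∈ Set.Icc (-1:ℝ) (-δ),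
      1 - (-z) ^ a ≤ ((-Real.log δ) / (1 - δ)) * a * (1 - (-z))) ∧
    (∀ δ₁ ∈ Set.Ioo (0:ℝ) 1, ∃ c > (0:ℝ), ∀ a ∈ Set.Ioo (0:ℝ) 1, ∀ z ∈ Set.Icc (-1:ℝ) 0,
      (-z) ^ δ₁ * (1 - (-z) ^ a) ≤ c * a) := by
  refine ⟨?_, ?_, ?_, ?_⟩
  · -- part (i)
    rintro z ⟨hz1, hz2⟩ a ⟨ha0, ha1⟩
    set t := -z with htdef
    have ht0 : 0 ≤ t := by simp [htdef]; linarith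
    have ht1 : t ≤ 1 := by simp [htdef]; linarith
    constructor
    · have := aux_rpow_le ht0 ha0.le ha1.le
      linarith
    · have := aux_le_rpow ht0 ht1 ha0 ha1.le
      linarith
  · -- part (ii)
    rintro z ⟨hz1, hz2⟩ b ⟨hb0, hb1⟩
    set t := -z with htdef
    have ht0 : 0 ≤ t := by simp [htdef]; linarith
    have ht1 : t ≤ 1 := by simp [htdef]; linarith
    have hb0' : (0:ℝ) < b := by linarith
    -- lower bound : b(1-t) ≤ 1 - t^b
    have hlow : b * (1 - t) ≤ 1 - t ^ b := by
      have := aux_rpow_le ht0 hb0'.le hb1.le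
      linarith
    -- key: t^b ≥ 1 - b(1-t) - 4(1-b)(1-t)^2
    have hkey : 1 - b * (1 - t) - 4 * (1 - b) * (1 - t) ^ 2 ≤ t ^ b := by
      by_cases hpos : 1 - b * (1 - t) - 4 * (1 - b) * (1 - t) ^ 2 ≤ 0
      · exact hpos.trans (Real.rpow_nonneg ht0 b)
      push_neg at hpos
      have htpos : 0 < t := by
        rcases eq_or_lt_of_le ht0 with h | h
        · exfalso; rw [← h] at hpos; nlinarith
        · exact h
      have hc : t ^ (1 - b) ≤ 1 + (1 - b) * (t - 1) :=
        aux_rpow_le ht0 (by linarith) (by linarith)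
      have hcpos : (0:ℝ) < 1 + (1 - b) * (t - 1) := by nlinarith
      have hprod : t ^ b * t ^ (1 - b) = t := by
        rw [← Real.rpow_add htpos, show b + (1 - b) = (1:ℝ) by ring, Real.rpow_one]
      have hbpos : 0 < t ^ b := Real.rpow_pos_of_pos htpos b
      have h1 : t ^ b * (1 + (1 - b) * (t - 1)) ≥ t := by
        calc t ^ b * (1 + (1 - b) * (t - 1)) ≥ t ^ b * t ^ (1 - b) := by
              exact mul_le_mul_of_nonneg_left hc hbpos.le
          _ = t := hprod
      have h2 : (1 - b * (1 - t) - 4 * (1 - b) * (1 - t) ^ 2) * (1 + (1 - b) * (t - 1)) ≤ t := by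
        nlinarith [sq_nonneg (1 - t), sq_nonneg ((1 - b) * (1 - t))]
      exact le_of_mul_le_mul_right (by linarith) hcpos
    have habs : |(1 - t) - b⁻¹ * (1 - t ^ b)| = b⁻¹ * (1 - t ^ b) - (1 - t) := by
      rw [abs_of_nonpos]
      · ring
      · have : 1 - t ≤ b⁻¹ * (1 - t ^ b) := by
          rw [le_inv_mul_iff₀ hb0']
          linarith
        linarith
    rw [habs]
    rw [sub_le_iff_le_add]
    have h8 : 1 - t ^ b ≤ b * ((1 - t) + 8 * (1 - b) * (1 - t) ^ 2) := by nlinarith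
    calc b⁻¹ * (1 - t ^ b) ≤ b⁻¹ * (b * ((1 - t) + 8 * (1 - b) * (1 - t) ^ 2)) := by
          apply mul_le_mul_of_nonneg_left h8 (by positivity)
      _ = (1 - t) + 8 * (1 - b) * (1 - t) ^ 2 := by field_simp
      _ = 8 * (1 - b) * (1 - t) ^ 2 + (1 - t) := by ring
  · -- part (iii)
    rintro δ ⟨hδ0, hδ1⟩ a ⟨ha0, ha1⟩ z ⟨hz1, hz2⟩
    set t := -z with htdef
    have htδ : δ ≤ t := by simp [htdef]; linarith
    have ht1 : t ≤ 1 := by simp [htdef]; linarith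
    have hδ1' : (0:ℝ) < 1 - δ := by linarith
    set lam := (1 - t) / (1 - δ) with hlam
    set mu := (t - δ) / (1 - δ) with hmu
    have hlam0 : 0 ≤ lam := div_nonneg (by linarith) (by linarith)
    have hmu0 : 0 ≤ mu := div_nonneg (by linarith) (by linarith)
    have hsum : lam + mu = 1 := by rw [hlam, hmu]; field_simp; ring
    have hconc := (Real.concaveOn_rpow ha0.le ha1.le).2 (x := δ) (by simp [le_of_lt hδ0])
      (y := 1) (by norm_num) hlam0 hmu0 hsum
    have hcomb : lam • δ + mu • (1:ℝ) = t := by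
      simp only [smul_eq_mul, hlam, hmu]; field_simp; ring
    rw [hcomb] at hconc
    simp only [smul_eq_mul, Real.one_rpow] at hconc
    -- hconc : lam * δ ^ a + mu * 1 ≤ t ^ a
    have hδa : 1 - δ ^ a ≤ a * (-Real.log δ) := aux_one_sub_rpow hδ0 ha0.le
    have : 1 - t ^ a ≤ lam * (1 - δ ^ a) := by nlinarith
    calc 1 - t ^ a ≤ lam * (1 - δ ^ a) := this
      _ ≤ lam * (a * (-Real.log δ)) := by
          apply mul_le_mul_of_nonneg_left hδa hlam0
      _ = (-Real.log δ) / (1 - δ) * a * (1 - t) := by rw [hlam]; ring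
  · -- part (iv)
    rintro δ₁ ⟨hδ₁0, hδ₁1⟩
    refine ⟨1 / δ₁, by positivity, ?_⟩
    rintro a ⟨ha0, ha1⟩ z ⟨hz1, hz2⟩
    set t := -z with htdef
    have ht0 : 0 ≤ t := by simp [htdef]; linarith
    have ht1 : t ≤ 1 := by simp [htdef]; linarith
    rcases eq_or_lt_of_le ht0 with h | htpos
    · rw [← h, Real.zero_rpow hδ₁0.ne']
      have : (0:ℝ) ≤ 1 / δ₁ * a := by positivity
      simpa using this
    have h1 : 1 - t ^ a ≤ a * (-Real.log t) := aux_one_sub_rpow htpos ha0.le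
    have hlogt : 0 ≤ -Real.log t := by
      simpa using Real.log_nonpos ht0 ht1
    have h2 : t ^ δ₁ * (-Real.log t) ≤ 1 / δ₁ := by
      have hlog : δ₁ * (-Real.log t) ≤ t ^ (-δ₁) := by
        have := Real.log_le_sub_one_of_pos (Real.rpow_pos_of_pos htpos (-δ₁))
        rw [Real.log_rpow htpos] at this
        linarith
      have hmul : t ^ δ₁ * (δ₁ * (-Real.log t)) ≤ t ^ δ₁ * t ^ (-δ₁) :=
        mul_le_mul_of_nonneg_left hlog (Real.rpow_nonneg ht0 δ₁)
      rw [← Real.rpow_add htpos, add_neg_cancel, Real.rpow_zero] at hmul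
      rw [le_div_iff₀ hδ₁0]
      nlinarith
    calc t ^ δ₁ * (1 - t ^ a) ≤ t ^ δ₁ * (a * (-Real.log t)) := by
          apply mul_le_mul_of_nonneg_left h1 (Real.rpow_nonneg ht0 δ₁)
      _ = a * (t ^ δ₁ * (-Real.log t)) := by ring
      _ ≤ a * (1 / δ₁) := by
          apply mul_le_mul_of_nonneg_left h2 ha0.le
      _ = 1 / δ₁ * a := by ring
end

section
/- For every real p ∈ [1,∞) there exists a constant C_p > 0 such that for all c ∈ (0,1]: (∫₀¹ |(1−t^c)/c + ln t|^p dt)^{1/p} ≤ C_p · c. -/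
open Real Set MeasureTheory

lemma aux_exp_quad (x : ℝ) (hx : 0 ≤ x) : Real.exp (-x) ≤ 1 - x + x ^ 2 / 2 := by
  set g : ℝ → ℝ := fun z => 1 - z + z ^ 2 / 2 - Real.exp (-z) with hg
  have hderiv : ∀ y : ℝ, HasDerivAt g (-1 + y + Real.exp (-y)) y := by
    intro y
    have h1 : HasDerivAt (fun z : ℝ => Real.exp (-z)) (-Real.exp (-y)) y := by
      exact ((Real.hasDerivAt_exp (-y)).comp y (hasDerivAt_neg y)).congr_deriv (by simp)
    have h2 : HasDerivAt (fun z : ℝ => 1 - z + z ^ 2 / 2) (-1 + y) y := by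
      have hpow : HasDerivAt (fun z : ℝ => z ^ 2 / 2) y y := by
        simpa using (hasDerivAt_pow 2 y).div_const 2
      have hlin : HasDerivAt (fun z : ℝ => 1 - z) (-1) y := by
        simpa using (hasDerivAt_id y).const_sub 1
      exact hlin.add hpow
    exact (h2.sub h1).congr_deriv (by ring)
  have hmono : Monotone g :=
    monotone_of_deriv_nonneg (fun y => (hderiv y).differentiableAt)
      (by
        intro y
        rw [(hderiv y).deriv]
        have := Real.add_one_le_exp (-y)
        linarith)
  have h0 : g 0 = 0 := by simp [hg]
  have := hmono hx
  rw [h0] at this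
  simp only [hg] at this
  linarith

lemma aux_abs_exp (y : ℝ) (hy : y ≤ 0) : |1 - Real.exp y + y| ≤ y ^ 2 / 2 := by
  have h1 : 1 + y ≤ Real.exp y := by linarith [Real.add_one_le_exp y]
  have h2 : Real.exp y ≤ 1 + y + y ^ 2 / 2 := by
    have := aux_exp_quad (-y) (by linarith)
    simpa [neg_neg] using this
  rw [abs_le]
  constructor <;> nlinarith

/-- Quantitative `L^p` rate of convergence of `(1−t^c)/c` to `−ln t` as
`c → 0⁺`: `(∫₀¹ |(1−t^c)/c + ln t|^p dt)^{1/p} ≤ C_p c`. -/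
theorem stmt4 (p : ℝ) (hp : 1 ≤ p) :
    ∃ C > (0:ℝ), ∀ c ∈ Set.Ioc (0:ℝ) 1,
      (∫ t in (0:ℝ)..1, |(1 - t ^ c) / c + Real.log t| ^ p) ^ (1/p) ≤ C * c := by
  have hp0 : 0 < p := lt_of_lt_of_le one_pos hp
  refine ⟨16 * p ^ 2, by positivity, ?_⟩
  rintro c ⟨hc0, hc1⟩
  set f : ℝ → ℝ := fun t => |(1 - t ^ c) / c + Real.log t| ^ p with hf
  set K : ℝ := (8 * p ^ 2 * c) ^ p with hK
  set g : ℝ → ℝ := fun t => K * t ^ (-(1/2) : ℝ) with hgdef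
  have hKnn : 0 ≤ 8 * p ^ 2 * c := by positivity
  -- pointwise bound on Ioc 0 1
  have hpt : ∀ t ∈ Set.Ioc (0:ℝ) 1, f t ≤ g t := by
    rintro t ⟨ht0, ht1⟩
    have hlogt : Real.log t ≤ 0 := Real.log_nonpos (le_of_lt ht0) ht1
    have hy : c * Real.log t ≤ 0 := mul_nonpos_of_nonneg_of_nonpos (le_of_lt hc0) hlogt
    have hrw : (1 - t ^ c) / c + Real.log t
        = (1 - Real.exp (c * Real.log t) + c * Real.log t) / c := by
      rw [Real.rpow_def_of_pos ht0]
      field_simp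
    have habs : |(1 - t ^ c) / c + Real.log t| ≤ c * (Real.log t) ^ 2 / 2 := by
      rw [hrw, abs_div, abs_of_pos hc0, div_le_iff₀ hc0]
      calc |1 - Real.exp (c * Real.log t) + c * Real.log t|
          ≤ (c * Real.log t) ^ 2 / 2 := aux_abs_exp _ hy
        _ = c * (Real.log t) ^ 2 / 2 * c := by ring
    -- bound log by rpow
    have hloginv : Real.log (1/t) ≤ (1/t) ^ ((1:ℝ)/(4*p)) / (1/(4*p)) :=
      Real.log_le_rpow_div (by positivity) (by positivity)
    have hlogabs : |Real.log t| ≤ 4 * p * t ^ (-(1/(4*p)) : ℝ) := by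
      have h1 : |Real.log t| = Real.log (1/t) := by
        rw [abs_of_nonpos hlogt, one_div, Real.log_inv]
      have h2 : (1/t : ℝ) ^ ((1:ℝ)/(4*p)) = t ^ (-(1/(4*p)) : ℝ) := by
        rw [one_div, ← Real.rpow_neg_one t, ← Real.rpow_mul (le_of_lt ht0)]
        congr 1
        ring
      rw [h1]
      calc Real.log (1/t) ≤ (1/t) ^ ((1:ℝ)/(4*p)) / (1/(4*p)) := hloginv
        _ = 4 * p * t ^ (-(1/(4*p)) : ℝ) := by
            rw [h2]; field_simp
    have hsq : (Real.log t) ^ 2 ≤ 16 * p ^ 2 * t ^ (-(1/(2*p)) : ℝ) := by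
      have h3 : (Real.log t) ^ 2 = |Real.log t| ^ 2 := (sq_abs _).symm
      have h4 : |Real.log t| ^ 2 ≤ (4 * p * t ^ (-(1/(4*p)) : ℝ)) ^ 2 :=
        pow_le_pow_left₀ (abs_nonneg _) hlogabs 2
      have hexp : (-(1/(4*p)) : ℝ) * (2:ℕ) = -(1/(2*p)) := by
        push_cast
        field_simp
        ring
      have h5 : (4 * p * t ^ (-(1/(4*p)) : ℝ)) ^ 2 = 16 * p ^ 2 * t ^ (-(1/(2*p)) : ℝ) := by
        rw [mul_pow, ← Real.rpow_natCast (t ^ (-(1/(4*p)) : ℝ)) 2,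
          ← Real.rpow_mul (le_of_lt ht0), hexp]
        ring
      rw [h3]; rw [h5] at h4; exact h4
    have hbase : |(1 - t ^ c) / c + Real.log t| ≤ 8 * p ^ 2 * c * t ^ (-(1/(2*p)) : ℝ) := by
      calc |(1 - t ^ c) / c + Real.log t| ≤ c * (Real.log t) ^ 2 / 2 := habs
        _ ≤ c * (16 * p ^ 2 * t ^ (-(1/(2*p)) : ℝ)) / 2 := by
            gcongr
        _ = 8 * p ^ 2 * c * t ^ (-(1/(2*p)) : ℝ) := by ring
    have hfg : f t ≤ (8 * p ^ 2 * c * t ^ (-(1/(2*p)) : ℝ)) ^ p :=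
      Real.rpow_le_rpow (abs_nonneg _) hbase (le_of_lt hp0)
    have hexp2 : (-(1/(2*p)) : ℝ) * p = -(1/2) := by
      field_simp
    have hrwg : (8 * p ^ 2 * c * t ^ (-(1/(2*p)) : ℝ)) ^ p = g t := by
      rw [Real.mul_rpow hKnn (Real.rpow_nonneg (le_of_lt ht0) _),
        ← Real.rpow_mul (le_of_lt ht0), hexp2]
    rw [hrwg] at hfg
    exact hfg
  -- integrability of g
  have hgii : IntervalIntegrable g volume 0 1 := by
    have : IntervalIntegrable (fun t : ℝ => t ^ (-(1/2) : ℝ)) volume 0 1 :=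
      intervalIntegral.intervalIntegrable_rpow' (by norm_num)
    simpa [hgdef] using this.const_mul K
  have hgint : IntegrableOn g (Set.Ioc (0:ℝ) 1) := by
    rw [← intervalIntegrable_iff_integrableOn_Ioc_of_le zero_le_one]
    exact hgii
  -- measurability of f
  have hfmeas : AEStronglyMeasurable f (volume.restrict (Set.Ioc (0:ℝ) 1)) := by
    have m1 : Measurable fun t : ℝ => t ^ c :=
      (continuous_id.rpow_const (fun _ => Or.inr (le_of_lt hc0))).measurable
    have m2 : Measurable fun t : ℝ => (1 - t ^ c) / c + Real.log t :=
      ((measurable_const.sub m1).div_const c).add Real.measurable_log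
    have m3 : Measurable f :=
      ((continuous_abs.rpow_const fun _ => Or.inr (le_of_lt hp0)).measurable).comp m2
    exact m3.aestronglyMeasurable
  -- integrability of f by domination
  have hfint : IntegrableOn f (Set.Ioc (0:ℝ) 1) := by
    apply Integrable.mono' hgint hfmeas
    filter_upwards [ae_restrict_mem measurableSet_Ioc] with t ht
    rw [Real.norm_eq_abs, abs_of_nonneg (Real.rpow_nonneg (abs_nonneg _) p)]
    exact hpt t ht
  -- compare integrals
  have hmono : ∫ t in Set.Ioc (0:ℝ) 1, f t ≤ ∫ t in Set.Ioc (0:ℝ) 1, g t :=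
    setIntegral_mono_on hfint hgint measurableSet_Ioc hpt
  have hgval : ∫ t in Set.Ioc (0:ℝ) 1, g t = K * 2 := by
    rw [← intervalIntegral.integral_of_le zero_le_one]
    rw [hgdef]
    rw [intervalIntegral.integral_const_mul]
    rw [integral_rpow (Or.inl (by norm_num))]
    norm_num
  have hInonneg : 0 ≤ ∫ t in Set.Ioc (0:ℝ) 1, f t :=
    setIntegral_nonneg measurableSet_Ioc (fun t _ => Real.rpow_nonneg (abs_nonneg _) p)
  have hIeq : (∫ t in (0:ℝ)..1, |(1 - t ^ c) / c + Real.log t| ^ p)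
      = ∫ t in Set.Ioc (0:ℝ) 1, f t := by
    rw [intervalIntegral.integral_of_le zero_le_one]
  rw [hIeq]
  have hKval : (K * 2) ^ ((1:ℝ)/p) ≤ 16 * p ^ 2 * c := by
    have hKp : (0:ℝ) ≤ K := Real.rpow_nonneg hKnn p
    rw [Real.mul_rpow hKp (by norm_num)]
    have h1 : K ^ ((1:ℝ)/p) = 8 * p ^ 2 * c := by
      rw [hK, ← Real.rpow_mul hKnn]
      rw [mul_one_div_cancel (ne_of_gt hp0), Real.rpow_one]
    have h2 : (2:ℝ) ^ ((1:ℝ)/p) ≤ 2 := by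
      calc (2:ℝ) ^ ((1:ℝ)/p) ≤ (2:ℝ) ^ (1:ℝ) := by
            apply Real.rpow_le_rpow_of_exponent_le (by norm_num)
            rw [div_le_one hp0]
            exact hp
        _ = 2 := Real.rpow_one 2
    calc K ^ ((1:ℝ)/p) * (2:ℝ) ^ ((1:ℝ)/p) ≤ K ^ ((1:ℝ)/p) * 2 := by
          apply mul_le_mul_of_nonneg_left h2 (Real.rpow_nonneg hKp _)
      _ = 16 * p ^ 2 * c := by rw [h1]; ring
  calc (∫ t in Set.Ioc (0:ℝ) 1, f t) ^ ((1:ℝ)/p)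
      ≤ (K * 2) ^ ((1:ℝ)/p) :=
        Real.rpow_le_rpow hInonneg (hgval ▸ hmono) (by positivity)
    _ ≤ 16 * p ^ 2 * c := hKval
end

section
/- Fix p ∈ [1,∞). For k ∈ (0,1) with k² < 1, define f_k, g : (-1,0) → ℝ by f_k(ẑ) := (1/(k²(1−k²))) · ((1−|ẑ|^{k²}) − k²(1−|ẑ|))/(1−|ẑ|)² and g(ẑ) := (−1−ẑ−ln|ẑ|)/(1−|ẑ|)², where |ẑ| := −ẑ and |ẑ|^{k²} is the real power. Then ∫_{-1}^{0} |f_k(ẑ) − g(ẑ)|^p dẑ → 0 as k → 0⁺. -/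
open Real Set Filter MeasureTheory
open scoped Interval

set_option maxHeartbeats 1000000 in
lemma auxBound (p a t : ℝ) (hp : 1 ≤ p) (ha0 : 0 < a) (ha1 : a ≤ 1/2)
    (ht0 : 0 < t) (ht1 : t < 1) :
    |(1/(a*(1-a))) * ((1 - t ^ a) - a*(1-t)) / (1-t)^2 - (t - 1 - Real.log t)/(1-t)^2|
      ≤ 6*p * t ^ (-(1/(2*p))) := by
  set L : ℝ := -Real.log t with hLdef
  set u : ℝ := 1 - t with hudef
  have hu0 : 0 < u := by simp [hudef]; linarith
  have hu1 : u < 1 := by simp [hudef]; linarith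
  have hL0 : 0 < L := by
    have := Real.log_neg ht0 ht1
    simp [hLdef]; linarith
  have hu2 : (0:ℝ) < u^2 := by positivity
  -- Bernoulli upper bound on t^a
  have hA : t ^ a ≤ 1 - a*u := by
    have h := Real.geom_mean_le_arith_mean2_weighted (w₁ := a) (w₂ := 1-a) (p₁ := t) (p₂ := 1)
      ha0.le (by linarith) ht0.le zero_le_one (by ring)
    rw [Real.one_rpow, mul_one] at h
    simp only [hudef]; linarith
  -- exp lower bound
  have hB : 1 - t ^ a ≤ a * L := by
    have h := Real.add_one_le_exp (Real.log t * a)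
    rw [Real.rpow_def_of_pos ht0]
    simp only [hLdef]; nlinarith
  -- log lower bound : t * L ≤ u
  have hC : t * L ≤ u := by
    have h := Real.log_le_sub_one_of_pos (show (0:ℝ) < 1/t by positivity)
    rw [one_div, Real.log_inv] at h
    have h2 : L ≤ 1/t - 1 := by rw [hLdef, one_div]; linarith
    have := mul_le_mul_of_nonneg_left h2 ht0.le
    calc t * L ≤ t * (1/t - 1) := this
      _ = u := by field_simp [hudef]; exact hudef.symm
  have hLu : u ≤ L := by nlinarith
  -- A and B
  set A : ℝ := (1/(a*(1-a))) * ((1 - t ^ a) - a*(1-t)) / (1-t)^2 with hAdef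
  set B : ℝ := (t - 1 - Real.log t)/(1-t)^2 with hBdef
  have hBeq : B = (L - u)/u^2 := by rw [hBdef, hLdef, hudef]; ring_nf
  have hN0 : 0 ≤ (1 - t ^ a) - a*(1-t) := by
    simp only [hudef] at hA ⊢; nlinarith
  have ha1' : (0:ℝ) < 1 - a := by linarith
  have hApos : 0 ≤ A := by
    rw [hAdef]
    apply div_nonneg _ (sq_nonneg _)
    exact mul_nonneg (by positivity) hN0
  have hAle : A ≤ 2*(L-u)/u^2 := by
    rw [hAdef, ← hudef, div_le_div_iff₀ (by positivity) hu2]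
    have hNle : (1 - t ^ a) - a*u ≤ a*(L-u) := by nlinarith
    have hinv : 1/(a*(1-a)) ≤ 2/a := by
      rw [div_le_div_iff₀ (by positivity) ha0]
      nlinarith
    calc (1/(a*(1-a))) * ((1 - t ^ a) - a*u) * u^2
        ≤ (2/a) * (a*(L-u)) * u^2 := by
          apply mul_le_mul_of_nonneg_right _ hu2.le
          apply mul_le_mul hinv hNle hN0 (by positivity)
      _ = 2*(L-u)*u^2 := by field_simp
  have hB0 : 0 ≤ B := by rw [hBeq]; apply div_nonneg (by linarith) hu2.le
  have hBle : B ≤ 2*(L-u)/u^2 := by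
    rw [hBeq]; gcongr; linarith
  have key : |A - B| ≤ 3*(L-u)/u^2 := by
    rw [abs_sub_le_iff]
    constructor
    · have : (0:ℝ) ≤ (L-u)/u^2 := div_nonneg (by linarith) hu2.le
      calc A - B ≤ A := by linarith
        _ ≤ 2*(L-u)/u^2 := hAle
        _ ≤ 3*(L-u)/u^2 := by gcongr <;> linarith
    · calc B - A ≤ B := by linarith
        _ ≤ 2*(L-u)/u^2 := hBle
        _ ≤ 3*(L-u)/u^2 := by gcongr <;> linarith
  -- final chain
  have step1 : 3*(L-u)/u^2 ≤ 3*(1+L) := by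
    rw [div_le_iff₀ hu2]
    have h1 : L * (1-u) ≤ u := by
      have : t = 1 - u := by simp [hudef]
      nlinarith
    nlinarith [mul_le_mul_of_nonneg_left h1 hu0.le]
  have step2 : 3*(1+L) ≤ 6*p * t ^ (-(1/(2*p))) := by
    have hp0 : (0:ℝ) < p := by linarith
    have hrw : t ^ (-(1/(2*p))) = Real.exp (L / (2*p)) := by
      rw [Real.rpow_def_of_pos ht0]
      congr 1
      rw [hLdef]; field_simp
    have hexp := Real.add_one_le_exp (L / (2*p))
    rw [hrw]
    have h2p : (1:ℝ) ≤ 2*p := by linarith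
    have : 6*p * (L/(2*p) + 1) ≤ 6*p * Real.exp (L/(2*p)) :=
      mul_le_mul_of_nonneg_left hexp (by linarith)
    have heq : 6*p * (L/(2*p) + 1) = 3*L + 6*p := by
      have hpne : p ≠ 0 := by positivity
      field_simp
      ring
    linarith
  linarith [key, step1, step2, abs_nonneg (A - B)]

lemma auxLim (t : ℝ) (ht0 : 0 < t) (ht1 : t < 1) :
    Tendsto (fun k : ℝ =>
        (1 / (k ^ 2 * (1 - k ^ 2))) * ((1 - t ^ (k ^ 2)) - k ^ 2 * (1 - t)) / (1 - t) ^ 2)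
      (nhdsWithin 0 (Ioo (0:ℝ) 1)) (nhds ((t - 1 - Real.log t) / (1 - t) ^ 2)) := by
  set c := Real.log t with hc
  have hu2 : (0:ℝ) < (1-t)^2 := by nlinarith
  have hd : HasDerivAt (fun a : ℝ => Real.exp (a * c)) c 0 := by
    have := (hasDerivAt_mul_const (x := (0:ℝ)) c).exp
    simpa using this
  rw [hasDerivAt_iff_tendsto_slope] at hd
  have hslope : Tendsto (fun a : ℝ => (Real.exp (a*c) - 1)/a) (nhdsWithin 0 {(0:ℝ)}ᶜ) (nhds c) := by
    refine Tendsto.congr (fun a => ?_) hd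
    simp [slope_def_field]
  have hsq : Tendsto (fun k : ℝ => k^2) (nhdsWithin 0 (Ioo (0:ℝ) 1)) (nhdsWithin 0 {(0:ℝ)}ᶜ) := by
    rw [tendsto_nhdsWithin_iff]
    constructor
    · have h := (continuous_pow 2).tendsto (0:ℝ)
      simpa using h.mono_left nhdsWithin_le_nhds
    · filter_upwards [self_mem_nhdsWithin] with k hk
      simpa using pow_ne_zero 2 (ne_of_gt hk.1)
  have hD : Tendsto (fun k : ℝ => (1 - Real.exp (k^2 * c))/(k^2))
      (nhdsWithin 0 (Ioo (0:ℝ) 1)) (nhds (-c)) := by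
    have h := (hslope.comp hsq).neg
    refine Tendsto.congr (fun k => ?_) h
    simp only [Function.comp_apply]
    ring
  have hden : Tendsto (fun k : ℝ => (1 - k^2) * (1-t)^2)
      (nhdsWithin 0 (Ioo (0:ℝ) 1)) (nhds (1 * (1-t)^2)) := by
    have h : Tendsto (fun k : ℝ => (1 - k^2) * (1-t)^2) (nhds 0) (nhds ((1 - 0^2) * (1-t)^2)) :=
      (((continuous_const.sub (continuous_pow 2)).mul continuous_const).tendsto 0)
    simpa using h.mono_left nhdsWithin_le_nhds
  have hmain := (hD.sub (tendsto_const_nhds (x := (1 - t)))).div hden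
    (by simpa using hu2.ne' : (1:ℝ) * (1-t)^2 ≠ 0)
  have hval : (-c - (1 - t)) / (1 * (1-t)^2) = (t - 1 - Real.log t) / (1 - t) ^ 2 := by
    rw [hc]; ring
  rw [hval] at hmain
  refine Tendsto.congr' ?_ hmain
  filter_upwards [self_mem_nhdsWithin] with k hk
  have hk0 : k^2 ≠ 0 := pow_ne_zero 2 (ne_of_gt hk.1)
  have hk1 : 1 - k^2 ≠ 0 := by nlinarith [hk.1, hk.2]
  have hrpow : t ^ (k^2) = Real.exp (k^2 * c) := by
    rw [Real.rpow_def_of_pos ht0, hc, mul_comm]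
  rw [hrpow]
  simp only [Pi.div_apply]
  field_simp
  rw [div_sub' hk0, div_div]

/-- Lemma B.8: `L^p((-1,0))` convergence, as `k → 0⁺` (with `k ∈ (0,1)`), of
`f_k(ẑ) = (1/(k²(1−k²))) ((1−|ẑ|^{k²}) − k²(1−|ẑ|))/(1−|ẑ|)²` to
`g(ẑ) = (−1−ẑ−ln|ẑ|)/(1−|ẑ|)²`, where `|ẑ| = −ẑ`. -/
theorem stmt5 (p : ℝ) (hp : 1 ≤ p) :
    Filter.Tendsto
      (fun k : ℝ =>
        ∫ z in (-1:ℝ)..0,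
          |(1 / (k ^ 2 * (1 - k ^ 2)))
              * ((1 - (-z) ^ (k ^ 2)) - k ^ 2 * (1 - (-z))) / (1 - (-z)) ^ 2
            - (-1 - z - Real.log (-z)) / (1 - (-z)) ^ 2| ^ p)
      (nhdsWithin 0 (Set.Ioo (0:ℝ) 1)) (nhds 0) := by
  have hp0 : (0:ℝ) < p := by linarith
  have hpne : p ≠ 0 := ne_of_gt hp0
  have huIoc : Ι (-1:ℝ) 0 = Ioc (-1:ℝ) 0 := uIoc_of_le (by norm_num)
  have hae : ∀ᵐ x : ℝ, x ≠ (0:ℝ) := by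
    have h : MeasureTheory.volume ({(0:ℝ)} : Set ℝ) = 0 := measure_singleton 0
    rw [ae_iff]
    convert h using 2
    ext x; simp
  -- measurability
  have hmeas : ∀ k : ℝ, AEStronglyMeasurable
      (fun z : ℝ =>
        |(1 / (k ^ 2 * (1 - k ^ 2)))
            * ((1 - (-z) ^ (k ^ 2)) - k ^ 2 * (1 - (-z))) / (1 - (-z)) ^ 2
          - (-1 - z - Real.log (-z)) / (1 - (-z)) ^ 2| ^ p)
      (MeasureTheory.volume.restrict (Ι (-1:ℝ) 0)) := by
    intro k
    apply Measurable.aestronglyMeasurable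
    have hrpm : Measurable fun z : ℝ => (-z) ^ (k^2) :=
      (Real.continuous_rpow_const (sq_nonneg k)).measurable.comp measurable_neg
    have hlogm : Measurable fun z : ℝ => Real.log (-z) :=
      Real.measurable_log.comp measurable_neg
    have hinner : Measurable fun z : ℝ =>
        (1 / (k ^ 2 * (1 - k ^ 2)))
            * ((1 - (-z) ^ (k ^ 2)) - k ^ 2 * (1 - (-z))) / (1 - (-z)) ^ 2
          - (-1 - z - Real.log (-z)) / (1 - (-z)) ^ 2 := by
      apply Measurable.sub
      · exact (((measurable_const.sub hrpm).sub
          (measurable_const.mul (measurable_const.sub measurable_neg))).const_mul _).div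
          ((measurable_const.sub measurable_neg).pow_const 2)
      · exact (((measurable_const.sub measurable_id).sub hlogm).div
          ((measurable_const.sub measurable_neg).pow_const 2))
    exact (Real.continuous_rpow_const (le_of_lt hp0)).measurable.comp hinner.abs
  -- bound
  have hbound : ∀ᶠ k in nhdsWithin (0:ℝ) (Ioo (0:ℝ) 1),
      ∀ᵐ x : ℝ, x ∈ Ι (-1:ℝ) 0 →
        ‖|(1 / (k ^ 2 * (1 - k ^ 2)))
              * ((1 - (-x) ^ (k ^ 2)) - k ^ 2 * (1 - (-x))) / (1 - (-x)) ^ 2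
            - (-1 - x - Real.log (-x)) / (1 - (-x)) ^ 2| ^ p‖
          ≤ (6*p)^p * (-x) ^ (-(1/2) : ℝ) := by
    have h1 : ∀ᶠ k in nhdsWithin (0:ℝ) (Ioo (0:ℝ) 1), k ∈ Ioo (0:ℝ) 1 :=
      self_mem_nhdsWithin
    have h2 : ∀ᶠ k in nhdsWithin (0:ℝ) (Ioo (0:ℝ) 1), k^2 < 1/2 := by
      have hcont : Tendsto (fun k : ℝ => k^2) (nhdsWithin (0:ℝ) (Ioo (0:ℝ) 1)) (nhds 0) := by
        have h := (continuous_pow 2).tendsto (0:ℝ)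
        simpa using h.mono_left nhdsWithin_le_nhds
      exact hcont.eventually_lt_const (by norm_num)
    filter_upwards [h1, h2] with k hk hk2
    filter_upwards [hae] with z hz0 hzI
    rw [huIoc] at hzI
    have hzIoo : z ∈ Ioo (-1:ℝ) 0 := ⟨hzI.1, lt_of_le_of_ne hzI.2 hz0⟩
    have ht0 : 0 < -z := by linarith [hzIoo.2]
    have ht1 : -z < 1 := by linarith [hzIoo.1]
    have hrw : (-1 - z - Real.log (-z)) = ((-z) - 1 - Real.log (-z)) := by ring
    rw [hrw]
    have hX := auxBound p (k^2) (-z) hp (pow_pos hk.1 2) (le_of_lt hk2) ht0 ht1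
    rw [Real.norm_eq_abs, abs_of_nonneg (Real.rpow_nonneg (abs_nonneg _) p)]
    refine le_trans (Real.rpow_le_rpow (abs_nonneg _) hX (le_of_lt hp0)) (le_of_eq ?_)
    rw [Real.mul_rpow (by positivity) (Real.rpow_nonneg ht0.le _),
      ← Real.rpow_mul ht0.le]
    have hexp : -(1/(2*p)) * p = -(1/2 : ℝ) := by
      field_simp
    rw [hexp]
  -- integrability of the bound
  have hint : IntervalIntegrable (fun x : ℝ => (6*p)^p * (-x) ^ (-(1/2) : ℝ))
      MeasureTheory.volume (-1) 0 := by
    have h1 : IntervalIntegrable (fun x : ℝ => x ^ (-(1/2) : ℝ)) MeasureTheory.volume 0 1 :=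
      intervalIntegral.intervalIntegrable_rpow' (by norm_num)
    have h2 := (IntervalIntegrable.iff_comp_neg (by simp)).mp h1
    rw [neg_zero] at h2
    exact (h2.symm.const_mul _)
  -- pointwise limit
  have hlim : ∀ᵐ x : ℝ, x ∈ Ι (-1:ℝ) 0 →
      Tendsto (fun k : ℝ =>
          |(1 / (k ^ 2 * (1 - k ^ 2)))
              * ((1 - (-x) ^ (k ^ 2)) - k ^ 2 * (1 - (-x))) / (1 - (-x)) ^ 2
            - (-1 - x - Real.log (-x)) / (1 - (-x)) ^ 2| ^ p)
        (nhdsWithin (0:ℝ) (Ioo (0:ℝ) 1)) (nhds ((fun _ : ℝ => (0:ℝ)) x)) := by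
    filter_upwards [hae] with z hz0 hzI
    rw [huIoc] at hzI
    have hzIoo : z ∈ Ioo (-1:ℝ) 0 := ⟨hzI.1, lt_of_le_of_ne hzI.2 hz0⟩
    have ht0 : 0 < -z := by linarith [hzIoo.2]
    have ht1 : -z < 1 := by linarith [hzIoo.1]
    have hA := auxLim (-z) ht0 ht1
    have hval : ((-z) - 1 - Real.log (-z)) / (1 - (-z)) ^ 2
        = (-1 - z - Real.log (-z)) / (1 - (-z)) ^ 2 := by ring_nf
    rw [hval] at hA
    have hsub := hA.sub_const ((-1 - z - Real.log (-z)) / (1 - (-z)) ^ 2)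
    rw [sub_self] at hsub
    have hcont : ContinuousAt (fun x : ℝ => |x| ^ p) 0 := by
      have h := Real.continuousAt_rpow_const (|(0:ℝ)|) p (Or.inr (le_of_lt hp0))
      exact h.comp continuous_abs.continuousAt
    have := hcont.tendsto.comp hsub
    simpa [Function.comp_def, Real.zero_rpow hpne] using this
  have h := intervalIntegral.tendsto_integral_filter_of_dominated_convergence
    (μ := MeasureTheory.volume) (a := (-1:ℝ)) (b := (0:ℝ))
    (f := fun _ : ℝ => (0:ℝ))
    (bound := fun x : ℝ => (6*p)^p * (-x) ^ (-(1/2) : ℝ))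
    (Eventually.of_forall hmeas) hbound hint hlim
  simpa using h
end

section
/- Let α ∈ (1,2), δ ∈ (0,1), and let f : [-1,0] → ℝ be of class C^{α,δ}_{(hor)}. Then the limits c_j := lim_{z→0⁻} |z|^{j−α} f^{(j)}(z) exist for 2 ≤ j ≤ 5 and satisfy the recursion c_{j+1} = (j − α) c_j for j = 2, 3, 4. -/
open Real Set Filter Topology

/-- `f : [-1,0] → ℝ` is of class `C^{α,δ}_{(hor)}`: five times continuously
differentiable on `[-1,0)`, once continuously differentiable on `[-1,0]`, and
for each `2 ≤ j ≤ 5` the function `z ↦ |z|^{j−α} f^{(j)}(z)` extends to a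
`δ`-Hölder continuous function on `[-1,0]` (here `|z| = −z`). -/
def IsChor (α δ : ℝ) (f : ℝ → ℝ) : Prop :=
  ContDiffOn ℝ 5 f (Set.Ico (-1:ℝ) 0) ∧
  ContDiffOn ℝ 1 f (Set.Icc (-1:ℝ) 0) ∧
  ∀ j : ℕ, 2 ≤ j → j ≤ 5 →
    ∃ g : ℝ → ℝ,
      (∃ C : NNReal, HolderOnWith C δ.toNNReal g (Set.Icc (-1:ℝ) 0)) ∧
      ∀ z ∈ Set.Ico (-1:ℝ) 0,
        g z = (-z) ^ ((j : ℝ) - α) * iteratedDerivWithin j f (Set.Ico (-1:ℝ) 0) z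

/-- For `f ∈ C^{α,δ}_{(hor)}`, the limits `c_j = lim_{z→0⁻} |z|^{j−α} f^{(j)}(z)`
exist for `2 ≤ j ≤ 5` and satisfy `c_{j+1} = (j−α) c_j` for `j = 2,3,4`. -/
theorem stmt9 (α δ : ℝ) (hα : α ∈ Set.Ioo (1:ℝ) 2) (hδ : δ ∈ Set.Ioo (0:ℝ) 1)
    (f : ℝ → ℝ) (hf : IsChor α δ f) :
    ∃ c : ℕ → ℝ,
      (∀ j : ℕ, 2 ≤ j → j ≤ 5 →
        Filter.Tendsto
          (fun z => (-z) ^ ((j : ℝ) - α) * iteratedDerivWithin j f (Set.Ico (-1:ℝ) 0) z)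
          (nhdsWithin 0 (Set.Iio 0)) (nhds (c j))) ∧
      (∀ j : ℕ, 2 ≤ j → j ≤ 4 → c (j + 1) = ((j : ℝ) - α) * c j) := by
  obtain ⟨hsm, -, hgex⟩ := hf
  have hδ0 : (0:ℝ) < δ.toNNReal := by
    simpa [Real.toNNReal_pos] using hδ.1
  set F : ℕ → ℝ → ℝ :=
    fun j z => (-z) ^ ((j : ℝ) - α) * iteratedDerivWithin j f (Set.Ico (-1:ℝ) 0) z with hF
  -- the left filter at 0 agrees with the filter within (-1,0)
  have hfilter : 𝓝[Set.Iio (0:ℝ)] 0 = 𝓝[Set.Ioo (-1:ℝ) 0] 0 := by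
    rw [← Set.Ioi_inter_Iio, nhdsWithin_inter_of_mem]
    exact nhdsWithin_le_nhds (Ioi_mem_nhds (by norm_num))
  have hmem : ∀ᶠ z in 𝓝[Set.Iio (0:ℝ)] 0, z ∈ Set.Ioo (-1:ℝ) 0 := by
    rw [hfilter]; exact eventually_mem_nhdsWithin
  -- existence of the limits
  have htendg : ∀ j : ℕ, 2 ≤ j → j ≤ 5 → ∀ g : ℝ → ℝ,
      (∃ C : NNReal, HolderOnWith C δ.toNNReal g (Set.Icc (-1:ℝ) 0)) →
      (∀ z ∈ Set.Ico (-1:ℝ) 0, g z = F j z) →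
      Tendsto (F j) (𝓝[Set.Iio (0:ℝ)] 0) (𝓝 (g 0)) := by
    intro j h2 h5 g ⟨C, hC⟩ hgeq
    have hgc : ContinuousOn g (Set.Icc (-1:ℝ) 0) := hC.continuousOn hδ0
    have h0 : (0:ℝ) ∈ Set.Icc (-1:ℝ) 0 := by norm_num
    have h1 : Tendsto g (𝓝[Set.Icc (-1:ℝ) 0] 0) (𝓝 (g 0)) := hgc 0 h0
    have h2' : Tendsto g (𝓝[Set.Iio (0:ℝ)] 0) (𝓝 (g 0)) := by
      refine h1.mono_left ?_
      rw [hfilter]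
      exact nhdsWithin_mono _ Set.Ioo_subset_Icc_self
    refine h2'.congr' ?_
    filter_upwards [hmem] with z hz
    exact hgeq z (Set.Ioo_subset_Ico_self hz)
  set c : ℕ → ℝ := fun j => limUnder (𝓝[Set.Iio (0:ℝ)] 0) (F j) with hc
  have htend : ∀ j : ℕ, 2 ≤ j → j ≤ 5 →
      Tendsto (F j) (𝓝[Set.Iio (0:ℝ)] 0) (𝓝 (c j)) := by
    intro j h2 h5
    obtain ⟨g, hgH, hgeq⟩ := hgex j h2 h5
    have ht := htendg j h2 h5 g hgH hgeq
    have : c j = g 0 := ht.limUnder_eq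
    rw [this]; exact ht
  refine ⟨c, fun j h2 h5 => htend j h2 h5, ?_⟩
  -- the recursion
  intro j h2 h4
  set p : ℝ := (j : ℝ) - α with hp
  -- derivative formula for F j on (-1,0)
  have hUD : UniqueDiffOn ℝ (Set.Ico (-1:ℝ) 0) := uniqueDiffOn_Ico _ _
  have hu : DifferentiableOn ℝ (iteratedDerivWithin j f (Set.Ico (-1:ℝ) 0))
      (Set.Ico (-1:ℝ) 0) := by
    refine hsm.differentiableOn_iteratedDerivWithin ?_ hUD
    exact_mod_cast Nat.lt_of_lt_of_le (Nat.lt_succ_of_le h4) (by norm_num)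
  have hderiv : ∀ x ∈ Set.Ioo (-1:ℝ) 0,
      HasDerivAt (F j) ((F (j+1) x - p * F j x) / (-x)) x := by
    intro x hx
    have hxD : x ∈ Set.Ico (-1:ℝ) 0 := Set.Ioo_subset_Ico_self hx
    have hxpos : (0:ℝ) < -x := by linarith [hx.2]
    have hxne : -x ≠ 0 := ne_of_gt hxpos
    have hnhds : Set.Ico (-1:ℝ) 0 ∈ 𝓝 x :=
      mem_nhds_iff.2 ⟨Set.Ioo (-1:ℝ) 0, Set.Ioo_subset_Ico_self, isOpen_Ioo, hx⟩
    have h1 : HasDerivAt (iteratedDerivWithin j f (Set.Ico (-1:ℝ) 0))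
        (iteratedDerivWithin (j+1) f (Set.Ico (-1:ℝ) 0) x) x := by
      have := ((hu x hxD).hasDerivWithinAt).hasDerivAt hnhds
      rwa [← iteratedDerivWithin_succ] at this
    have h2' : HasDerivAt (fun z : ℝ => (-z) ^ p) ((p * (-x) ^ (p - 1)) * (-1)) x :=
      (Real.hasDerivAt_rpow_const (p := p) (Or.inl hxne)).comp x (hasDerivAt_neg x)
    have hmul := h2'.mul h1
    convert hmul using 1
    case e'_4 => rfl
    case e'_5 => rfl
    case e'_8 => rfl
    have e1 : (-x) ^ (((j:ℝ)+1) - α) = (-x) ^ p * (-x) := by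
      rw [show ((j:ℝ)+1) - α = p + 1 by ring, Real.rpow_add_one hxne]
    have e2 : (-x) ^ p = (-x) ^ (p-1) * (-x) := by
      rw [← Real.rpow_add_one hxne, sub_add_cancel]
    simp only [hF]
    push_cast
    rw [← hp, div_eq_iff hxne, e1]
    linear_combination (-(p * iteratedDerivWithin j f (Set.Ico (-1:ℝ) 0) x)) * e2
  -- the function whose limit is the defect
  have hφ : Tendsto (fun z => F (j+1) z - p * F j z) (𝓝[Set.Iio (0:ℝ)] 0)
      (𝓝 (c (j+1) - p * c j)) :=
    (htend (j+1) (by omega) (by omega)).sub ((htend j h2 (by omega)).const_mul p)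
  have hself : Set.Iio (0:ℝ) ∈ 𝓝[Set.Iio (0:ℝ)] (0:ℝ) := self_mem_nhdsWithin
  have hhalf : Tendsto (fun z : ℝ => z / 2) (𝓝[Set.Iio (0:ℝ)] 0) (𝓝[Set.Iio (0:ℝ)] 0) := by
    refine tendsto_nhdsWithin_of_tendsto_nhds_of_eventually_within _ ?_ ?_
    · have : Tendsto (fun z : ℝ => z / 2) (𝓝 (0:ℝ)) (𝓝 (0/2 : ℝ)) :=
        (continuous_id.div_const 2).tendsto 0
      simpa using this.mono_left nhdsWithin_le_nhds
    · filter_upwards [hself] with z hz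
      exact Set.mem_Iio.mpr (div_neg_of_neg_of_pos (Set.mem_Iio.mp hz) (by norm_num))
  have hψ : Tendsto (fun z => F j (z/2) - F j z) (𝓝[Set.Iio (0:ℝ)] 0) (𝓝 0) := by
    have := ((htend j h2 (by omega)).comp hhalf).sub (htend j h2 (by omega))
    simpa using this
  -- conclude by contradiction
  rw [← sub_eq_zero]
  by_contra hL
  set L : ℝ := c (j+1) - p * c j with hLdef
  have hLpos : 0 < |L| := abs_pos.2 hL
  -- a punctured interval on which the defect function is close to L
  have hE1 : ∀ᶠ z in 𝓝[Set.Iio (0:ℝ)] (0:ℝ), |(F (j+1) z - p * F j z) - L| < |L|/2 := by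
    have := Metric.tendsto_nhds.mp hφ (|L|/2) (by positivity)
    filter_upwards [this] with z hz
    rw [Real.dist_eq] at hz
    exact hz
  obtain ⟨ε, hε0, hεsub⟩ := mem_nhdsLT_iff_exists_Ioo_subset.1 hE1
  set b : ℝ := max ε (-2⁻¹) with hb
  have hb0 : b < 0 := max_lt hε0 (by norm_num)
  have hb1 : (-1:ℝ) < b := lt_of_lt_of_le (by norm_num) (le_max_right _ _)
  have hbsub : Set.Ioo b 0 ⊆ Set.Ioo ε 0 :=
    Set.Ioo_subset_Ioo (le_max_left _ _) le_rfl
  -- pick a point a where the increment F j (a/2) - F j a is small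
  have hEb : Set.Ioo b 0 ∈ 𝓝[Set.Iio (0:ℝ)] (0:ℝ) := by
    rw [← Set.Ioi_inter_Iio]
    exact Filter.inter_mem (nhdsWithin_le_nhds (Ioi_mem_nhds hb0)) hself
  have hE2 : ∀ᶠ z in 𝓝[Set.Iio (0:ℝ)] (0:ℝ), |F j (z/2) - F j z| < |L|/4 := by
    have := Metric.tendsto_nhds.mp hψ (|L|/4) (by positivity)
    filter_upwards [this] with z hz
    rw [Real.dist_eq, sub_zero] at hz
    exact hz
  obtain ⟨a, haI, haψ⟩ := ((Filter.eventually_mem_set.2 hEb).and hE2).exists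
  have ha0 : a < 0 := haI.2
  have hab : a < a/2 := by linarith
  have hsub2 : Set.Icc a (a/2) ⊆ Set.Ioo (-1:ℝ) 0 := by
    intro z hz
    constructor
    · linarith [hz.1, haI.1, hb1]
    · linarith [hz.2, ha0]
  -- mean value theorem
  obtain ⟨ξ, hξI, hξeq⟩ := exists_hasDerivAt_eq_slope (F j)
      (fun z => (F (j+1) z - p * F j z) / (-z)) hab
      (fun z hz => ((hderiv z (hsub2 hz)).continuousAt).continuousWithinAt)
      (fun z hz => hderiv z (hsub2 (Set.Ioo_subset_Icc_self hz)))
  have hξ0 : ξ < 0 := by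
    have := hsub2 (Set.Ioo_subset_Icc_self hξI); exact this.2
  have hξa : a < ξ := hξI.1
  have hξε : ξ ∈ Set.Ioo ε 0 := hbsub ⟨lt_trans haI.1 hξa, hξ0⟩
  have hξclose : |(F (j+1) ξ - p * F j ξ) - L| < |L|/2 := hεsub hξε
  have hξbig : |L|/2 < |F (j+1) ξ - p * F j ξ| := by
    have := abs_sub_abs_le_abs_sub L (F (j+1) ξ - p * F j ξ)
    rw [abs_sub_comm L (F (j+1) ξ - p * F j ξ)] at this
    linarith
  -- contradiction between the two estimates of the slope
  have hξne : (-ξ:ℝ) ≠ 0 := by intro h; nlinarith [hξI.1, ha0]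
  have hξeq' : (F (j+1) ξ - p * F j ξ) / (-ξ) = (F j (a/2) - F j a) / (a/2 - a) := hξeq
  have hξval : F (j+1) ξ - p * F j ξ = (F j (a/2) - F j a) / (a/2 - a) * (-ξ) :=
    (div_eq_iff hξne).mp hξeq'
  have habs : |F (j+1) ξ - p * F j ξ| ≤ |F j (a/2) - F j a| * 2 := by
    rw [hξval, abs_mul, abs_div, abs_of_pos (show (0:ℝ) < a/2 - a by linarith),
      abs_of_pos (show (0:ℝ) < -ξ by linarith)]
    rw [div_mul_eq_mul_div, div_le_iff₀ (by linarith : (0:ℝ) < a/2 - a)]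
    have h1 : -ξ ≤ -a := by linarith
    nlinarith [abs_nonneg (F j (a/2) - F j a)]
  linarith [hξbig, haψ, habs]
end

section
/- Let α ∈ (1,2), δ ∈ (0,1), and let f : [-1,0] → ℝ be of class C^{α,δ}_{(hor)}. Set c := c₂/(α(α−1)), where c₂ := lim_{z→0⁻}|z|^{2−α}f″(z), and define f₁(z) := f(z) − c|z|^{α}. Then f₁ is once continuously differentiable on [-1,0] and five times continuously differentiable on [-1,0), and for every δ′ ∈ (0,δ) and every 2 ≤ j ≤ 5 the function z ↦ |z|^{j−α−δ′} f₁^{(j)}(z) extends continuously to [-1,0] with value 0 at z = 0. In particular f admits the decomposition f(z) = c|z|^{α} + f₁(z) with f₁ of Hölder class α + δ′ for every δ′ < δ. -/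
open Real Set Filter MeasureTheory intervalIntegral


section helpers

private lemma negpow_hasDerivAt (p : ℝ) {z : ℝ} (hz : z < 0) :
    HasDerivAt (fun x : ℝ => (-x) ^ p) (-(p * (-z) ^ (p - 1))) z := by
  have h1 : HasDerivAt (fun x : ℝ => -x) (-1) z := (hasDerivAt_id z).neg
  have h2 := (Real.hasDerivAt_rpow_const (x := -z) (p := p)
    (Or.inl (by linarith))).comp z h1
  refine h2.congr_deriv ?_
  ring

private lemma negpow_contDiffAt {n : WithTop ℕ∞} {p : ℝ} {z : ℝ} (hz : z < 0) :
    ContDiffAt ℝ n (fun x : ℝ => (-x) ^ p) z := by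
  have h := (Real.contDiffAt_rpow_const_of_ne (x := -z) (p := p) (n := n)
    (by intro h; nlinarith [neg_pos.mpr hz])).comp z (contDiff_neg.contDiffAt (n := n))
  exact h

private lemma continuous_negpow {q : ℝ} (hq : 0 ≤ q) :
    Continuous fun x : ℝ => (-x) ^ q :=
  continuous_neg.rpow_const (fun _ => Or.inr hq)

private lemma continuousOn_negpow_neg {p : ℝ} {S : Set ℝ} (hS : ∀ x ∈ S, x < 0) :
    ContinuousOn (fun x : ℝ => (-x) ^ p) S := fun x hx =>
  (((Real.continuousAt_rpow_const (-x) p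
      (Or.inl (by have := hS x hx; intro h; nlinarith))).comp
    continuous_neg.continuousAt)).continuousWithinAt

private lemma holderOnWith_dist_le {C r : NNReal} {g : ℝ → ℝ} {s : Set ℝ}
    (h : HolderOnWith C r g s) {x y : ℝ} (hx : x ∈ s) (hy : y ∈ s) :
    dist (g x) (g y) ≤ C * dist x y ^ (r : ℝ) := by
  have H := h.edist_le hx hy
  rw [edist_nndist, edist_nndist, ← ENNReal.coe_rpow_of_nonneg _ r.coe_nonneg,
    ← ENNReal.coe_mul, ENNReal.coe_le_coe] at H
  rw [dist_nndist, dist_nndist]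
  exact_mod_cast H

private lemma iteratedDerivWithin_negpow (α : ℝ) (j : ℕ) :
    ∀ z ∈ Set.Ico (-1:ℝ) 0,
      iteratedDerivWithin j (fun x : ℝ => (-x) ^ α) (Set.Ico (-1:ℝ) 0) z
        = ((-1:ℝ)^j * ∏ i ∈ Finset.range j, (α - i)) * (-z) ^ (α - j) := by
  induction j with
  | zero => intro z hz; simp
  | succ j ih =>
    intro z hz
    have hu : UniqueDiffOn ℝ (Set.Ico (-1:ℝ) 0) := uniqueDiffOn_Ico _ _
    rw [iteratedDerivWithin_succ]
    rw [derivWithin_congr (fun y hy => ih y hy) (ih z hz)]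
    have hd : HasDerivWithinAt
        (fun x : ℝ => ((-1:ℝ)^j * ∏ i ∈ Finset.range j, (α - i)) * (-x) ^ (α - j))
        (((-1:ℝ)^j * ∏ i ∈ Finset.range j, (α - i)) * -((α - j) * (-z) ^ (α - j - 1)))
        (Set.Ico (-1:ℝ) 0) z :=
      ((negpow_hasDerivAt (α - j) hz.2).const_mul _).hasDerivWithinAt
    rw [hd.derivWithin (hu z hz)]
    have he : α - (↑(j + 1) : ℕ) = α - j - 1 := by push_cast; ring
    rw [he, Finset.prod_range_succ]
    push_cast
    ring

end helpers
private lemma key_rec (α : ℝ) (hα1 : 1 < α) (hα2 : α < 2) (j : ℕ) (hj : 2 ≤ j)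
    (F G gj gjj : ℝ → ℝ)
    (hFG : ∀ x ∈ Set.Ioo (-1:ℝ) 0, HasDerivAt F (G x) x)
    (hGcont : ContinuousOn G (Set.Ico (-1:ℝ) 0))
    (hgj : ∀ z ∈ Set.Ico (-1:ℝ) 0, gj z = (-z) ^ ((j:ℝ) - α) * F z)
    (hgjj : ∀ z ∈ Set.Ico (-1:ℝ) 0, gjj z = (-z) ^ (((j:ℝ) + 1) - α) * G z)
    (hgj0 : Filter.Tendsto gj (nhdsWithin 0 (Set.Iio 0)) (nhds (gj 0)))
    (hgjj0 : Filter.Tendsto gjj (nhdsWithin 0 (Set.Iio 0)) (nhds (gjj 0))) :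
    gjj 0 = ((j:ℝ) - α) * gj 0 := by
  set q : ℝ := (j:ℝ) - α with hq_def
  have hq : 0 < q := by
    have : (2:ℝ) ≤ (j:ℝ) := by exact_mod_cast hj
    simp only [hq_def]; linarith
  set L : ℝ := gjj 0 with hL_def
  -- main claim
  have claim : ∀ ε > (0:ℝ), |gj 0 - L / q| ≤ ε / q := by
    intro ε hε
    rw [Metric.tendsto_nhdsWithin_nhds] at hgjj0
    obtain ⟨d, hd, hball⟩ := hgjj0 ε hε
    set a : ℝ := max (-d / 2) (-1 / 2) with ha_def
    have ha0 : a < 0 := max_lt (by linarith) (by norm_num)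
    have ha1 : (-1:ℝ) < a := lt_of_lt_of_le (by norm_num) (le_max_right _ _)
    have hbound : ∀ t, a ≤ t → t < 0 → |gjj t - L| ≤ ε := by
      intro t h1 h2
      have hd2 : -d / 2 ≤ t := le_trans (le_max_left _ _) h1
      have hdist : dist t 0 < d := by
        rw [Real.dist_eq, sub_zero, abs_of_neg h2]; linarith
      have := hball (mem_Iio.2 h2) hdist
      rw [Real.dist_eq] at this
      exact this.le
    set K : ℝ := |F a - L / q * (-a) ^ (-q)| with hK_def
    -- pointwise estimate
    have hpoint : ∀ z ∈ Set.Ioo a 0,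
        |(-z) ^ q * F z - L / q| ≤ (-z) ^ q * K + ε / q := by
      intro z hz
      have hz0 : z < 0 := hz.2
      have haz : a < z := hz.1
      have hzpos : 0 < -z := by linarith
      have hapos : 0 < -a := by linarith
      have hIcc_sub : Set.Icc a z ⊆ Set.Ioo (-1:ℝ) 0 := fun t ht =>
        ⟨by linarith [ht.1], by linarith [ht.2]⟩
      have hIcc_sub' : Set.Icc a z ⊆ Set.Ico (-1:ℝ) 0 := fun t ht =>
        ⟨by linarith [ht.1], by linarith [ht.2]⟩
      have hneg : ∀ t ∈ Set.Icc a z, t < 0 := fun t ht => by linarith [ht.2]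
      have huIcc : Set.uIcc a z = Set.Icc a z := uIcc_of_le haz.le
      -- FTC for the power function with generic constant
      have FTCc : ∀ c : ℝ, (∀ t ∈ Set.uIcc a z,
          HasDerivAt (fun t : ℝ => c / q * (-t) ^ (-q)) (c * (-t) ^ (-q - 1)) t) := by
        intro c t ht
        have ht0 : t < 0 := hneg t (huIcc ▸ ht)
        have h := (negpow_hasDerivAt (-q) ht0).const_mul (c / q)
        have : c / q * -(-q * (-t) ^ (-q - 1)) = c * (-t) ^ (-q - 1) := by
          field_simp
        rw [← this]
        exact h
      have hint_pow : ∀ c : ℝ, IntervalIntegrable (fun t : ℝ => c * (-t) ^ (-q - 1))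
          volume a z := by
        intro c
        exact (continuousOn_const.mul (continuousOn_negpow_neg hneg)).intervalIntegrable_of_Icc
          haz.le
      have FTCval : ∀ c : ℝ, (∫ t in a..z, c * (-t) ^ (-q - 1)) =
          c / q * (-z) ^ (-q) - c / q * (-a) ^ (-q) := fun c =>
        intervalIntegral.integral_eq_sub_of_hasDerivAt (FTCc c) (hint_pow c)
      have hint_G : IntervalIntegrable G volume a z :=
        (hGcont.mono hIcc_sub').intervalIntegrable_of_Icc haz.le
      have hFTC1 : (∫ t in a..z, G t) = F z - F a :=
        intervalIntegral.integral_eq_sub_of_hasDerivAt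
          (fun t ht => hFG t (hIcc_sub (huIcc ▸ ht))) hint_G
      -- bound the difference integral
      have hGt : ∀ t ∈ Set.Icc a z, G t = gjj t * (-t) ^ (-q - 1) := by
        intro t ht
        have ht0 : 0 < -t := by have := hneg t ht; linarith
        have h1 := hgjj t (hIcc_sub' ht)
        have hexp : ((j:ℝ) + 1) - α = q + 1 := by simp only [hq_def]; ring
        rw [hexp] at h1
        have hone : (-t) ^ (q + 1) * (-t) ^ (-q - 1) = 1 := by
          rw [← Real.rpow_add ht0]; norm_num
        calc G t = ((-t) ^ (q + 1) * (-t) ^ (-q - 1)) * G t := by rw [hone, one_mul]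
          _ = ((-t) ^ (q + 1) * G t) * (-t) ^ (-q - 1) := by ring
          _ = gjj t * (-t) ^ (-q - 1) := by rw [← h1]
      have hEbound : ‖∫ t in a..z, (G t - L * (-t) ^ (-q - 1))‖ ≤
          |∫ t in a..z, ε * (-t) ^ (-q - 1)| := by
        apply intervalIntegral.norm_integral_le_abs_of_norm_le _ (hint_pow ε)
        apply ae_restrict_of_forall_mem measurableSet_uIoc
        intro t ht
        rw [Set.uIoc_of_le haz.le] at ht
        have htIcc : t ∈ Set.Icc a z := ⟨ht.1.le, ht.2⟩
        have ht0 : t < 0 := hneg t htIcc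
        have htp : (0:ℝ) ≤ (-t) ^ (-q - 1) := Real.rpow_nonneg (by linarith) _
        rw [hGt t htIcc, show gjj t * (-t) ^ (-q - 1) - L * (-t) ^ (-q - 1)
            = (gjj t - L) * (-t) ^ (-q - 1) by ring, Real.norm_eq_abs, abs_mul,
          abs_of_nonneg htp]
        exact mul_le_mul_of_nonneg_right (hbound t ht.1.le ht0) htp
      have hanti : (-a) ^ (-q) ≤ (-z) ^ (-q) :=
        Real.rpow_le_rpow_of_nonpos hzpos (by linarith) (by linarith)
      have hεq : 0 < ε / q := div_pos hε hq
      have hEbound2 : |∫ t in a..z, (G t - L * (-t) ^ (-q - 1))| ≤ ε / q * (-z) ^ (-q) := by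
        rw [← Real.norm_eq_abs]
        refine hEbound.trans ?_
        rw [FTCval ε, show ε / q * (-z) ^ (-q) - ε / q * (-a) ^ (-q)
            = ε / q * ((-z) ^ (-q) - (-a) ^ (-q)) by ring,
          abs_of_nonneg (mul_nonneg hεq.le (sub_nonneg.2 hanti))]
        exact mul_le_mul_of_nonneg_left
          (sub_le_self _ (Real.rpow_nonneg hapos.le (-q))) hεq.le
      have hE : F z - L / q * (-z) ^ (-q) = (F a - L / q * (-a) ^ (-q)) +
          ∫ t in a..z, (G t - L * (-t) ^ (-q - 1)) := by
        rw [intervalIntegral.integral_sub hint_G (hint_pow L), hFTC1, FTCval L]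
        ring
      have hinv : (-z) ^ q * (-z) ^ (-q) = 1 := by
        rw [← Real.rpow_add hzpos]; norm_num
      have hqz : (0:ℝ) ≤ (-z) ^ q := Real.rpow_nonneg hzpos.le q
      have h1 : (-z) ^ q * (F z - L / q * (-z) ^ (-q)) = (-z) ^ q * F z - L / q := by
        rw [mul_sub, show (-z) ^ q * (L / q * (-z) ^ (-q))
          = L / q * ((-z) ^ q * (-z) ^ (-q)) by ring, hinv, mul_one]
      calc |(-z) ^ q * F z - L / q|
          = (-z) ^ q * |F z - L / q * (-z) ^ (-q)| := by
            rw [← h1, abs_mul, abs_of_nonneg hqz]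
        _ ≤ (-z) ^ q * (K + ε / q * (-z) ^ (-q)) := by
            apply mul_le_mul_of_nonneg_left _ hqz
            rw [hE]
            exact (abs_add_le _ _).trans (by rw [hK_def]; gcongr)
        _ = (-z) ^ q * K + ε / q * ((-z) ^ q * (-z) ^ (-q)) := by ring
        _ = (-z) ^ q * K + ε / q := by rw [hinv, mul_one]
    -- eventual membership
    have hmem : ∀ᶠ z in nhdsWithin 0 (Set.Iio 0),
        z ∈ Set.Ioo a 0 ∧ z ∈ Set.Ico (-1:ℝ) 0 := by
      filter_upwards [eventually_mem_nhdsWithin,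
        eventually_nhdsWithin_of_eventually_nhds (eventually_gt_nhds ha0)] with z h1 h2
      exact ⟨⟨h2, h1⟩, ⟨by linarith, h1⟩⟩
    -- limits
    have hW : Filter.Tendsto (fun z => (-z) ^ q * F z - L / q)
        (nhdsWithin 0 (Set.Iio 0)) (nhds (gj 0 - L / q)) := by
      apply Filter.Tendsto.congr' _ (hgj0.sub_const (L / q))
      filter_upwards [hmem] with z hz
      rw [hgj z hz.2]
    have hKlim : Filter.Tendsto (fun z : ℝ => (-z) ^ q * K + ε / q)
        (nhdsWithin 0 (Set.Iio 0)) (nhds (ε / q)) := by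
      have h0 : Filter.Tendsto (fun z : ℝ => (-z) ^ q) (nhds 0) (nhds 0) := by
        have := (continuous_negpow hq.le).tendsto 0
        simpa [Real.zero_rpow (ne_of_gt hq)] using this
      have := (((h0.mono_left (nhdsWithin_le_nhds (s := Set.Iio 0))).mul_const K).add_const (ε / q))
      simpa using this
    exact le_of_tendsto_of_tendsto hW.abs hKlim
      (by filter_upwards [hmem] with z hz using hpoint z hz.1)
  -- conclude
  have hzero : gj 0 - L / q = 0 := by
    by_contra h
    have hx : 0 < |gj 0 - L / q| := abs_pos.2 h
    have := claim (|gj 0 - L / q| / 2 * q) (by positivity)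
    rw [mul_div_assoc, div_self (ne_of_gt hq), mul_one] at this
    linarith
  have : gj 0 = L / q := by linarith
  field_simp [ne_of_gt hq] at this
  linear_combination -this
private lemma build_g (α δ δ' c P : ℝ) (hδpos : 0 < δ) (hδ'0 : 0 < δ') (hδ'δ : δ' < δ)
    (j : ℕ) (f1 Fj : ℝ → ℝ) (C : NNReal) (gj : ℝ → ℝ)
    (hol : HolderOnWith C δ.toNNReal gj (Set.Icc (-1:ℝ) 0))
    (heq : ∀ z ∈ Set.Ico (-1:ℝ) 0, gj z = (-z) ^ ((j:ℝ) - α) * Fj z)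
    (hval : gj 0 = c * P)
    (hiter : ∀ z ∈ Set.Ico (-1:ℝ) 0,
      iteratedDerivWithin j f1 (Set.Ico (-1:ℝ) 0) z
        = Fj z - c * P * (-z) ^ (α - (j:ℝ))) :
    ∃ g : ℝ → ℝ, ContinuousOn g (Set.Icc (-1:ℝ) 0) ∧ g 0 = 0 ∧
      ∀ z ∈ Set.Ico (-1:ℝ) 0,
        g z = (-z) ^ ((j:ℝ) - α - δ') *
          iteratedDerivWithin j f1 (Set.Ico (-1:ℝ) 0) z := by
  have hδt : 0 < δ.toNNReal := Real.toNNReal_pos.2 hδpos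
  refine ⟨fun z => (-z) ^ (-δ') * (gj z - gj 0), ?_,
    by simp [Real.zero_rpow (by linarith : -δ' ≠ 0)], ?_⟩
  · intro x hx
    rcases eq_or_lt_of_le hx.2 with h0 | h0
    · subst h0
      have h0mem : (0:ℝ) ∈ Set.Icc (-1:ℝ) 0 := by norm_num
      have key : Filter.Tendsto (fun z => (-z) ^ (-δ') * (gj z - gj 0))
          (nhdsWithin 0 (Set.Icc (-1:ℝ) 0)) (nhds 0) := by
        apply squeeze_zero_norm' (a := fun z : ℝ => C * (-z) ^ (δ - δ'))
        · filter_upwards [eventually_mem_nhdsWithin] with z hz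
          have hz' : (0:ℝ) ≤ -z := neg_nonneg.2 hz.2
          have hd := holderOnWith_dist_le hol hz h0mem
          rw [Real.dist_eq, Real.dist_eq, sub_zero, abs_of_nonpos hz.2,
            Real.coe_toNNReal δ hδpos.le] at hd
          have hnn : (0:ℝ) ≤ (-z) ^ (-δ') := Real.rpow_nonneg hz' _
          calc ‖(-z) ^ (-δ') * (gj z - gj 0)‖
              = (-z) ^ (-δ') * |gj z - gj 0| := by
                rw [Real.norm_eq_abs, abs_mul, abs_of_nonneg hnn]
            _ ≤ (-z) ^ (-δ') * (C * (-z) ^ δ) := by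
                apply mul_le_mul_of_nonneg_left _ hnn
                simpa [Real.dist_eq, abs_sub_comm] using hd
            _ = C * ((-z) ^ (-δ') * (-z) ^ δ) := by ring
            _ = C * (-z) ^ (δ - δ') := by
                rw [show δ - δ' = -δ' + δ by ring, Real.rpow_add' hz' (by linarith)]
        · have := ((continuous_negpow (by linarith : (0:ℝ) ≤ δ - δ')).tendsto 0).const_mul
            (C : ℝ)
          have h2 : Filter.Tendsto (fun z : ℝ => C * (-z) ^ (δ - δ')) (nhds 0) (nhds 0) := by
            simpa [Real.zero_rpow (by linarith : δ - δ' ≠ 0)] using this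
          exact h2.mono_left nhdsWithin_le_nhds
      simpa [ContinuousWithinAt] using key
    · apply ContinuousWithinAt.mul
      · exact (((Real.continuousAt_rpow_const (-x) (-δ')
          (Or.inl (by intro hh; nlinarith))).comp
            continuous_neg.continuousAt)).continuousWithinAt
      · exact ((hol.continuousOn hδt x hx).sub continuousWithinAt_const)
  · intro z hz
    have hz2 : (0:ℝ) < -z := by have := hz.2; linarith
    show (-z) ^ (-δ') * (gj z - gj 0) = _
    rw [hiter z hz, heq z hz, hval,
      show (j:ℝ) - α - δ' = -δ' + ((j:ℝ) - α) by ring, Real.rpow_add hz2]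
    have e2 : (-z) ^ ((j:ℝ) - α) * (-z) ^ (α - (j:ℝ)) = 1 := by
      rw [← Real.rpow_add hz2]; simp
    linear_combination ((-z) ^ (-δ') * (c * P)) * e2

/-- Decomposition lemma: for `f ∈ C^{α,δ}_{(hor)}` with
`c₂ = lim_{z→0⁻} |z|^{2−α} f″(z)` and `c = c₂/(α(α−1))`, the remainder
`f₁(z) = f(z) − c|z|^α` is `C¹` on `[-1,0]`, `C⁵` on `[-1,0)`, and for every
`δ′ ∈ (0,δ)` and `2 ≤ j ≤ 5` the function `z ↦ |z|^{j−α−δ′} f₁^{(j)}(z)`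
extends continuously to `[-1,0]` with value `0` at `z = 0`; in particular
`f(z) = c|z|^α + f₁(z)` with `f₁` of Hölder class `α + δ′` for every `δ′ < δ`. -/
theorem stmt10 (α δ : ℝ) (hα : α ∈ Set.Ioo (1:ℝ) 2) (hδ : δ ∈ Set.Ioo (0:ℝ) 1)
    (f : ℝ → ℝ) (hf : IsChor α δ f) (c₂ : ℝ)
    (hc₂ : Filter.Tendsto
      (fun z => (-z) ^ ((2 : ℝ) - α) * iteratedDerivWithin 2 f (Set.Ico (-1:ℝ) 0) z)
      (nhdsWithin 0 (Set.Iio 0)) (nhds c₂)) :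
    ContDiffOn ℝ 1 (fun z => f z - c₂ / (α * (α - 1)) * (-z) ^ α) (Set.Icc (-1:ℝ) 0) ∧
    ContDiffOn ℝ 5 (fun z => f z - c₂ / (α * (α - 1)) * (-z) ^ α) (Set.Ico (-1:ℝ) 0) ∧
    ∀ δ' ∈ Set.Ioo (0:ℝ) δ, ∀ j : ℕ, 2 ≤ j → j ≤ 5 →
      ∃ g : ℝ → ℝ, ContinuousOn g (Set.Icc (-1:ℝ) 0) ∧ g 0 = 0 ∧
        ∀ z ∈ Set.Ico (-1:ℝ) 0,
          g z = (-z) ^ ((j : ℝ) - α - δ') *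
            iteratedDerivWithin j
              (fun w => f w - c₂ / (α * (α - 1)) * (-w) ^ α)
              (Set.Ico (-1:ℝ) 0) z := by
  obtain ⟨hα1, hα2⟩ := hα
  obtain ⟨hδ0, hδ1⟩ := hδ
  obtain ⟨hf5, hf1, hfj⟩ := hf
  have hsu : UniqueDiffOn ℝ (Set.Ico (-1:ℝ) 0) := uniqueDiffOn_Ico _ _
  have hIu : UniqueDiffOn ℝ (Set.Icc (-1:ℝ) 0) := uniqueDiffOn_Icc (by norm_num)
  have hαpos : 0 < α * (α - 1) := by nlinarith
  set c : ℝ := c₂ / (α * (α - 1)) with hc_def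
  -- C⁵ on Ico of the power part
  have hρ5 : ContDiffOn ℝ 5 (fun z : ℝ => c * (-z) ^ α) (Set.Ico (-1:ℝ) 0) := fun x hx =>
    (contDiffAt_const.mul (negpow_contDiffAt hx.2)).contDiffWithinAt
  have hpart2 : ContDiffOn ℝ 5 (fun z => f z - c * (-z) ^ α) (Set.Ico (-1:ℝ) 0) :=
    hf5.sub hρ5
  -- C¹ on Icc of the power part
  have hd1 : ∀ x ∈ Set.Icc (-1:ℝ) 0, HasDerivWithinAt (fun z : ℝ => c * (-z) ^ α)
      (-(c * α * (-x) ^ (α - 1))) (Set.Icc (-1:ℝ) 0) x := by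
    intro x hx
    rcases eq_or_lt_of_le hx.2 with h0 | h0
    · subst h0
      have hval0 : -(c * α * (-(0:ℝ)) ^ (α - 1)) = 0 := by
        simp [Real.zero_rpow (by intro h; nlinarith : α - 1 ≠ 0)]
      rw [hval0, hasDerivWithinAt_iff_tendsto_slope]
      have hlim : Filter.Tendsto (fun z : ℝ => -(c * (-z) ^ (α - 1))) (nhds 0) (nhds 0) := by
        have : Filter.Tendsto (fun z : ℝ => -(c * (-z) ^ (α - 1))) (nhds 0) (nhds (-(c * (-0) ^ (α - 1)))) := (((continuous_const (y := c)).mul (continuous_negpow (by linarith : (0:ℝ) ≤ α - 1))).neg).tendsto 0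
        simpa [Real.zero_rpow (by intro h; nlinarith : α - 1 ≠ 0)] using this
      apply Filter.Tendsto.congr' _ (hlim.mono_left nhdsWithin_le_nhds)
      filter_upwards [eventually_mem_nhdsWithin] with z hz
      have hz0 : z ≠ 0 := by simpa using hz.2
      have hzneg : z < 0 := lt_of_le_of_ne hz.1.2 hz0
      have hnz : -z ≠ 0 := by intro h; apply hz0; linarith
      rw [slope_def_field]
      simp only [neg_zero, Real.zero_rpow (by intro h; nlinarith : α ≠ 0), mul_zero,
        sub_zero]
      rw [show α = (α - 1) + 1 by ring, Real.rpow_add_one hnz]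
      field_simp
      ring
    · have := ((negpow_hasDerivAt α h0).const_mul c).hasDerivWithinAt
        (s := Set.Icc (-1:ℝ) 0)
      refine this.congr_deriv ?_
      ring
  have hρ1 : ContDiffOn ℝ 1 (fun z : ℝ => c * (-z) ^ α) (Set.Icc (-1:ℝ) 0) := by
    rw [show (1 : WithTop ℕ∞) = 0 + 1 from (zero_add 1).symm,
      contDiffOn_succ_iff_derivWithin hIu]
    refine ⟨fun x hx => (hd1 x hx).differentiableWithinAt, by simp, ?_⟩
    rw [contDiffOn_zero]
    apply ContinuousOn.congr
      (((continuous_const (y := c * α)).mul (continuous_negpow (by linarith : (0:ℝ) ≤ α - 1))).neg.continuousOn)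
    intro x hx
    rw [(hd1 x hx).derivWithin (hIu x hx)]
    rfl
  have hpart1 : ContDiffOn ℝ 1 (fun z => f z - c * (-z) ^ α) (Set.Icc (-1:ℝ) 0) :=
    hf1.sub hρ1
  refine ⟨hpart1, hpart2, ?_⟩
  -- Part 3
  obtain ⟨g2, ⟨C2, hol2⟩, heq2⟩ := hfj 2 (by norm_num) (by norm_num)
  obtain ⟨g3, ⟨C3, hol3⟩, heq3⟩ := hfj 3 (by norm_num) (by norm_num)
  obtain ⟨g4, ⟨C4, hol4⟩, heq4⟩ := hfj 4 (by norm_num) (by norm_num)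
  obtain ⟨g5, ⟨C5, hol5⟩, heq5⟩ := hfj 5 (by norm_num) (by norm_num)
  have hδt : 0 < δ.toNNReal := Real.toNNReal_pos.2 hδ0
  have h0mem : (0:ℝ) ∈ Set.Icc (-1:ℝ) 0 := by norm_num
  have hnhds : nhdsWithin (0:ℝ) (Set.Iio 0) ≤ nhdsWithin 0 (Set.Icc (-1:ℝ) 0) := by
    have heqset : Set.Iio (0:ℝ) ∩ Set.Ioi (-1:ℝ) = Set.Ico (-1:ℝ) 0 ∩ Set.Ioi (-1:ℝ) := by
      ext x
      simp only [Set.mem_inter_iff, Set.mem_Iio, Set.mem_Ioi, Set.mem_Ico]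
      constructor
      · rintro ⟨h1, h2⟩; exact ⟨⟨h2.le, h1⟩, h2⟩
      · rintro ⟨⟨_, h1⟩, h2⟩; exact ⟨h1, h2⟩
    rw [nhdsWithin_eq_nhdsWithin' (Ioi_mem_nhds (by norm_num : (-1:ℝ) < 0)) heqset]
    exact nhdsWithin_mono _ Set.Ico_subset_Icc_self
  have tdW : ∀ (g : ℝ → ℝ) (C : NNReal), HolderOnWith C δ.toNNReal g (Set.Icc (-1:ℝ) 0) →
      Filter.Tendsto g (nhdsWithin 0 (Set.Iio 0)) (nhds (g 0)) := fun g C hl =>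
    ((hl.continuousOn hδt) 0 h0mem).mono_left hnhds
  have hmemIco : ∀ᶠ z in nhdsWithin (0:ℝ) (Set.Iio 0), z ∈ Set.Ico (-1:ℝ) 0 := by
    filter_upwards [eventually_mem_nhdsWithin,
      eventually_nhdsWithin_of_eventually_nhds
        (eventually_gt_nhds (by norm_num : (-1:ℝ) < 0))] with z h1 h2
    exact ⟨h2.le, h1⟩
  -- derivative structure of f
  have hFG : ∀ k : ℕ, k < 5 → ∀ x ∈ Set.Ioo (-1:ℝ) 0,
      HasDerivAt (iteratedDerivWithin k f (Set.Ico (-1:ℝ) 0))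
        (iteratedDerivWithin (k+1) f (Set.Ico (-1:ℝ) 0) x) x := by
    intro k hk x hx
    have hxs : x ∈ Set.Ico (-1:ℝ) 0 := Set.Ioo_subset_Ico_self hx
    have hsx : Set.Ico (-1:ℝ) 0 ∈ nhds x :=
      mem_nhds_iff.2 ⟨Set.Ioo (-1:ℝ) 0, Set.Ioo_subset_Ico_self, isOpen_Ioo, hx⟩
    have hdiff : DifferentiableWithinAt ℝ
        (iteratedDerivWithin k f (Set.Ico (-1:ℝ) 0)) (Set.Ico (-1:ℝ) 0) x :=
      (hf5.differentiableOn_iteratedDerivWithin (by exact_mod_cast hk) hsu) x hxs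
    have h := hdiff.hasDerivWithinAt.hasDerivAt hsx
    rwa [← iteratedDerivWithin_succ] at h
  have hGc : ∀ k : ℕ, k ≤ 5 → ContinuousOn
      (iteratedDerivWithin k f (Set.Ico (-1:ℝ) 0)) (Set.Ico (-1:ℝ) 0) := fun k hk =>
    hf5.continuousOn_iteratedDerivWithin (by exact_mod_cast hk) hsu
  -- identify g2 0 = c₂
  have hg20 : g2 0 = c₂ := by
    have ht2 := tdW g2 C2 hol2
    have : Filter.Tendsto
        (fun z => (-z) ^ ((2:ℝ) - α) * iteratedDerivWithin 2 f (Set.Ico (-1:ℝ) 0) z)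
        (nhdsWithin 0 (Set.Iio 0)) (nhds (g2 0)) := by
      apply Filter.Tendsto.congr' _ ht2
      filter_upwards [hmemIco] with z hz
      rw [heq2 z hz]; norm_num
    exact tendsto_nhds_unique this hc₂
  -- recursion
  have h32 : g3 0 = ((2:ℕ):ℝ) * g2 0 - α * g2 0 := by
    have heq3' : ∀ z ∈ Set.Ico (-1:ℝ) 0,
        g3 z = (-z) ^ ((((2:ℕ):ℝ)) + 1 - α) * iteratedDerivWithin 3 f (Set.Ico (-1:ℝ) 0) z := by
      intro z hz; rw [heq3 z hz]; norm_num
    have := key_rec α hα1 hα2 2 le_rfl _ _ g2 g3 (hFG 2 (by norm_num)) (hGc 3 (by norm_num))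
      heq2 heq3' (tdW g2 C2 hol2) (tdW g3 C3 hol3)
    rw [this]; ring
  have h43 : g4 0 = ((3:ℕ):ℝ) * g3 0 - α * g3 0 := by
    have heq4' : ∀ z ∈ Set.Ico (-1:ℝ) 0,
        g4 z = (-z) ^ ((((3:ℕ):ℝ)) + 1 - α) * iteratedDerivWithin 4 f (Set.Ico (-1:ℝ) 0) z := by
      intro z hz; rw [heq4 z hz]; norm_num
    have := key_rec α hα1 hα2 3 (by norm_num) _ _ g3 g4 (hFG 3 (by norm_num))
      (hGc 4 (by norm_num)) heq3 heq4' (tdW g3 C3 hol3) (tdW g4 C4 hol4)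
    rw [this]; ring
  have h54 : g5 0 = ((4:ℕ):ℝ) * g4 0 - α * g4 0 := by
    have heq5' : ∀ z ∈ Set.Ico (-1:ℝ) 0,
        g5 z = (-z) ^ ((((4:ℕ):ℝ)) + 1 - α) * iteratedDerivWithin 5 f (Set.Ico (-1:ℝ) 0) z := by
      intro z hz; rw [heq5 z hz]; norm_num
    have := key_rec α hα1 hα2 4 (by norm_num) _ _ g4 g5 (hFG 4 (by norm_num))
      (hGc 5 (by norm_num)) heq4 heq5' (tdW g4 C4 hol4) (tdW g5 C5 hol5)
    rw [this]; ring
  -- splitting of the iterated derivative of f₁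
  have hiter : ∀ j : ℕ, j ≤ 5 → ∀ z ∈ Set.Ico (-1:ℝ) 0,
      iteratedDerivWithin j (fun w => f w - c * (-w) ^ α) (Set.Ico (-1:ℝ) 0) z
        = iteratedDerivWithin j f (Set.Ico (-1:ℝ) 0) z
          - c * ((-1:ℝ)^j * ∏ i ∈ Finset.range j, (α - i)) * (-z) ^ (α - j) := by
    intro j hj z hz
    have hcast : (j : WithTop ℕ∞) ≤ 5 := by exact_mod_cast hj
    have hρj : ContDiffOn ℝ j (fun w : ℝ => (-w) ^ α) (Set.Ico (-1:ℝ) 0) := fun x hx =>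
      (negpow_contDiffAt hx.2).contDiffWithinAt
    have h1 : iteratedDerivWithin j (fun w => f w - c * (-w) ^ α) (Set.Ico (-1:ℝ) 0) z
        = iteratedDerivWithin j f (Set.Ico (-1:ℝ) 0) z
          - iteratedDerivWithin j (fun w => c * (-w) ^ α) (Set.Ico (-1:ℝ) 0) z :=
      iteratedDerivWithin_sub hz hsu (hf5.of_le hcast z hz) (hρ5.of_le hcast z hz)
    have h2 : iteratedDerivWithin j (fun w => c * (-w) ^ α) (Set.Ico (-1:ℝ) 0) z
        = c * iteratedDerivWithin j (fun w : ℝ => (-w) ^ α) (Set.Ico (-1:ℝ) 0) z :=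
      iteratedDerivWithin_const_mul hz hsu c (hρj z hz)
    rw [h1, h2, iteratedDerivWithin_negpow α j z hz]
    ring
  intro δ' hδ'mem j hj2 hj5
  interval_cases j
  · -- j = 2
    refine build_g α δ δ' c ((-1:ℝ)^2 * ∏ i ∈ Finset.range 2, (α - (i:ℕ))) hδ0 hδ'mem.1
      hδ'mem.2 2 _ _ C2 g2 hol2 heq2 ?_ ?_
    · rw [hg20, hc_def]
      simp [Finset.prod_range_succ]
      field_simp
    · intro z hz
      rw [hiter 2 (by norm_num) z hz]
  · refine build_g α δ δ' c ((-1:ℝ)^3 * ∏ i ∈ Finset.range 3, (α - (i:ℕ))) hδ0 hδ'mem.1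
      hδ'mem.2 3 _ _ C3 g3 hol3 heq3 ?_ ?_
    · rw [h32, hg20, hc_def]
      simp [Finset.prod_range_succ]
      field_simp
      ring
    · intro z hz
      rw [hiter 3 (by norm_num) z hz]
  · refine build_g α δ δ' c ((-1:ℝ)^4 * ∏ i ∈ Finset.range 4, (α - (i:ℕ))) hδ0 hδ'mem.1
      hδ'mem.2 4 _ _ C4 g4 hol4 heq4 ?_ ?_
    · rw [h43, h32, hg20, hc_def]
      simp [Finset.prod_range_succ]
      field_simp
      ring
    · intro z hz
      rw [hiter 4 (by norm_num) z hz]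
  · refine build_g α δ δ' c ((-1:ℝ)^5 * ∏ i ∈ Finset.range 5, (α - (i:ℕ))) hδ0 hδ'mem.1
      hδ'mem.2 5 _ _ C5 g5 hol5 heq5 ?_ ?_
    · rw [h54, h43, h32, hg20, hc_def]
      simp [Finset.prod_range_succ]
      field_simp
      ring
    · intro z hz
      rw [hiter 5 (by norm_num) z hz]
end

section
/- Assume the self-similar ODE system. Then ψ(ẑ) ≥ 0 for every ẑ ∈ [-1,0). -/
open Real Set Filter Topology

/-- The `k`-self-similar Einstein-scalar-field ODE system in the interior
region, for the self-similar quantities `r, ν, λ, Ω, m` and the scalar-field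
derivative `ψ = φ̊′` as functions of the self-similar coordinate `ẑ ∈ [-1,0)`
(with `|ẑ| = −ẑ` and `μ = 2m/r`), together with the algebraic identities and
the initial conditions at the axis `ẑ = −1`. -/
structure SSS (k : ℝ) (r ν lam Ω m ψ : ℝ → ℝ) : Prop where
  k_pos : 0 < k
  k_small : k ^ 2 < 1 / 3
  cont_r : ContinuousOn r (Set.Ico (-1 : ℝ) 0)
  cont_ν : ContinuousOn ν (Set.Ico (-1 : ℝ) 0)
  cont_lam : ContinuousOn lam (Set.Ico (-1 : ℝ) 0)
  cont_Ω : ContinuousOn Ω (Set.Ico (-1 : ℝ) 0)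
  cont_m : ContinuousOn m (Set.Ico (-1 : ℝ) 0)
  cont_ψ : ContinuousOn ψ (Set.Ico (-1 : ℝ) 0)
  diff_r : ∀ z ∈ Set.Ioo (-1 : ℝ) 0, DifferentiableAt ℝ r z
  diff_ν : ∀ z ∈ Set.Ioo (-1 : ℝ) 0, DifferentiableAt ℝ ν z
  diff_lam : ∀ z ∈ Set.Ioo (-1 : ℝ) 0, DifferentiableAt ℝ lam z
  diff_Ω : ∀ z ∈ Set.Ioo (-1 : ℝ) 0, DifferentiableAt ℝ Ω z
  diff_m : ∀ z ∈ Set.Ioo (-1 : ℝ) 0, DifferentiableAt ℝ m z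
  diff_ψ : ∀ z ∈ Set.Ioo (-1 : ℝ) 0, DifferentiableAt ℝ ψ z
  contd_r : ContinuousOn (deriv r) (Set.Ioo (-1 : ℝ) 0)
  contd_ν : ContinuousOn (deriv ν) (Set.Ioo (-1 : ℝ) 0)
  contd_lam : ContinuousOn (deriv lam) (Set.Ioo (-1 : ℝ) 0)
  contd_Ω : ContinuousOn (deriv Ω) (Set.Ioo (-1 : ℝ) 0)
  contd_m : ContinuousOn (deriv m) (Set.Ioo (-1 : ℝ) 0)
  contd_ψ : ContinuousOn (deriv ψ) (Set.Ioo (-1 : ℝ) 0)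
  r_pos : ∀ z ∈ Set.Ioo (-1 : ℝ) 0, 0 < r z
  Ω_pos : ∀ z ∈ Set.Ioo (-1 : ℝ) 0, 0 < Ω z
  eq1 : ∀ z ∈ Set.Ioo (-1 : ℝ) 0, deriv r z = lam z
  eq2 : ∀ z ∈ Set.Ioo (-1 : ℝ) 0,
    r z * z * deriv lam z = -(ν z * lam z) - (1/4) * Ω z ^ 2
  eq3 : ∀ z ∈ Set.Ioo (-1 : ℝ) 0,
    r z * deriv ν z = -(ν z * lam z) - (1/4) * Ω z ^ 2
  eq4 : ∀ z ∈ Set.Ioo (-1 : ℝ) 0,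
    2 * (Ω z)⁻¹ * ν z * z * deriv Ω z = z * deriv ν z + r z * (z * ψ z + k) ^ 2
  eq5 : ∀ z ∈ Set.Ioo (-1 : ℝ) 0,
    2 * (Ω z)⁻¹ * lam z * deriv Ω z = deriv lam z + r z * ψ z ^ 2
  eq6 : ∀ z ∈ Set.Ioo (-1 : ℝ) 0,
    r z * z * deriv ψ z = -2 * lam z * z * ψ z - k * lam z
  eq7 : ∀ z ∈ Set.Ioo (-1 : ℝ) 0,
    2 * lam z * deriv m z = (1 - 2 * m z / r z) * r z ^ 2 * ψ z ^ 2
  eq8 : ∀ z ∈ Set.Ioo (-1 : ℝ) 0,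
    2 * ν z * z * deriv m z
      = 2 * ν z * m z + (1 - 2 * m z / r z) * r z ^ 2 * (z * ψ z + k) ^ 2
  alg9 : ∀ z ∈ Set.Ioo (-1 : ℝ) 0, ν z + r z = z * lam z
  alg10 : ∀ z ∈ Set.Ioo (-1 : ℝ) 0,
    (1/4) * Ω z ^ 2 + ν z * lam z
      = r z ^ 2 * z * ψ z ^ 2 + 2 * k * z * lam z * r z * ψ z + k ^ 2 * r z * lam z
  alg11 : ∀ z ∈ Set.Ioo (-1 : ℝ) 0, m z = (r z / 2) * (1 + 4 * ν z * lam z / Ω z ^ 2)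
  init_r : r (-1) = 0
  init_ν : ν (-1) = -(1/2)
  init_lam : lam (-1) = 1/2
  init_Ω : Ω (-1) = 1
  init_m : m (-1) = 0
  init_ψ : ψ (-1) = k / 2


lemma SSS.lam_pos {k : ℝ} {r ν lam Ω m ψ : ℝ → ℝ} (h : SSS k r ν lam Ω m ψ) :
    ∀ z ∈ Set.Ioo (-1 : ℝ) 0, 0 < lam z := by
  by_contra hcon
  push_neg at hcon
  obtain ⟨z₁, hz₁, hlam₁⟩ := hcon
  set S : Set ℝ := {z ∈ Set.Icc (-1 : ℝ) z₁ | lam z ≤ 0} with hSdef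
  have hIccsub : Set.Icc (-1 : ℝ) z₁ ⊆ Set.Ico (-1 : ℝ) 0 :=
    fun x hx => ⟨hx.1, lt_of_le_of_lt hx.2 hz₁.2⟩
  have hSne : S.Nonempty := ⟨z₁, ⟨le_of_lt hz₁.1, le_refl _⟩, hlam₁⟩
  have hScl : IsClosed S := by
    have : S = Set.Icc (-1 : ℝ) z₁ ∩ lam ⁻¹' Set.Iic 0 := by
      ext x; simp [hSdef, Set.mem_sep_iff]
    rw [this]
    exact ((h.cont_lam.mono hIccsub).preimage_isClosed_of_isClosed isClosed_Icc isClosed_Iic)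
  have hSbdd : BddBelow S := ⟨-1, fun x hx => hx.1.1⟩
  set z₀ := sInf S with hz₀def
  have hz₀S : z₀ ∈ S := hScl.csInf_mem hSne hSbdd
  have hz₀mem : z₀ ∈ Set.Icc (-1 : ℝ) z₁ := hz₀S.1
  have hz₀le : lam z₀ ≤ 0 := hz₀S.2
  have hz₀gt : (-1 : ℝ) < z₀ := by
    rcases eq_or_lt_of_le hz₀mem.1 with he | hlt
    · exfalso; rw [← he, h.init_lam] at hz₀le; linarith
    · exact hlt
  have hz₀Ioo : z₀ ∈ Set.Ioo (-1 : ℝ) 0 := ⟨hz₀gt, lt_of_le_of_lt hz₀mem.2 hz₁.2⟩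
  have hpos : ∀ z ∈ Set.Ioo (-1 : ℝ) z₀, 0 < lam z := by
    intro z hz
    by_contra hc
    push_neg at hc
    have hzS : z ∈ S := ⟨⟨le_of_lt hz.1, le_trans (le_of_lt hz.2) hz₀mem.2⟩, hc⟩
    have := csInf_le hSbdd hzS
    linarith [hz.2]
  have hneB : (𝓝[Set.Ioo (-1 : ℝ) z₀] z₀).NeBot := by
    rw [← mem_closure_iff_nhdsWithin_neBot, closure_Ioo (ne_of_lt hz₀gt)]
    exact ⟨le_of_lt hz₀gt, le_refl _⟩
  have hge : 0 ≤ lam z₀ := by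
    have hc : ContinuousWithinAt lam (Set.Ico (-1 : ℝ) 0) z₀ :=
      h.cont_lam z₀ ⟨le_of_lt hz₀gt, hz₀Ioo.2⟩
    have ht : Filter.Tendsto lam (𝓝[Set.Ioo (-1 : ℝ) z₀] z₀) (𝓝 (lam z₀)) :=
      hc.tendsto.mono_left (nhdsWithin_mono _
        (fun x hx => ⟨le_of_lt hx.1, lt_trans hx.2 hz₀Ioo.2⟩))
    exact ge_of_tendsto ht
      (eventually_nhdsWithin_of_forall (fun z hz => le_of_lt (hpos z hz)))
  have hlam0 : lam z₀ = 0 := le_antisymm hz₀le hge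
  have heq2 := h.eq2 z₀ hz₀Ioo
  rw [hlam0] at heq2
  have hΩ := h.Ω_pos z₀ hz₀Ioo
  have hr := h.r_pos z₀ hz₀Ioo
  have hd : 0 < deriv lam z₀ := by
    nlinarith [mul_pos hr (neg_pos.mpr hz₀Ioo.2), mul_pos hΩ hΩ]
  have hder : HasDerivAt lam (deriv lam z₀) z₀ := (h.diff_lam z₀ hz₀Ioo).hasDerivAt
  have hslope := hasDerivAt_iff_tendsto_slope.mp hder
  have ht : Filter.Tendsto (slope lam z₀) (𝓝[Set.Ioo (-1 : ℝ) z₀] z₀)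
      (𝓝 (deriv lam z₀)) :=
    hslope.mono_left (nhdsWithin_mono _ (fun x hx => ne_of_lt hx.2))
  have hev : ∀ᶠ x in 𝓝[Set.Ioo (-1 : ℝ) z₀] z₀, 0 < slope lam z₀ x :=
    ht.eventually (eventually_gt_nhds hd)
  obtain ⟨x, hx0, hxI⟩ := (hev.and eventually_mem_nhdsWithin).exists
  have hsx : slope lam z₀ x = (lam x - lam z₀) / (x - z₀) := slope_def_field lam z₀ x
  rw [hsx, hlam0, sub_zero] at hx0
  have hlx := hpos x hxI
  have hden : x - z₀ < 0 := by linarith [hxI.2]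
  have : lam x / (x - z₀) < 0 := div_neg_of_pos_of_neg hlx hden
  linarith

/-- Positivity of the scalar-field derivative: `ψ(ẑ) ≥ 0` on `[-1,0)`. -/
theorem stmt12 (k : ℝ) (r ν lam Ω m ψ : ℝ → ℝ) (h : SSS k r ν lam Ω m ψ) :
    ∀ z ∈ Set.Ico (-1 : ℝ) 0, 0 ≤ ψ z := by
  have hlam := h.lam_pos
  set f : ℝ → ℝ := fun z => r z ^ 2 * ψ z with hfdef
  have hcont : ContinuousOn f (Set.Ico (-1 : ℝ) 0) := (h.cont_r.pow 2).mul h.cont_ψ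
  have hderiv : ∀ z ∈ Set.Ioo (-1 : ℝ) 0, 0 < deriv f z := by
    intro z hz
    have hr := (h.diff_r z hz).hasDerivAt
    have hψ := (h.diff_ψ z hz).hasDerivAt
    have hfz : HasDerivAt f
        (2 * r z ^ 1 * deriv r z * ψ z + r z ^ 2 * deriv ψ z) z := by
      have := (hr.pow 2).mul hψ
      norm_num at this
      rw [pow_one]
      exact this
    rw [hfz.deriv]
    have h6 := h.eq6 z hz
    have h1 := h.eq1 z hz
    have hrp := h.r_pos z hz
    have hlp := hlam z hz
    have hz0 : z < 0 := hz.2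
    rw [h1]
    have key : z * (2 * r z ^ 1 * lam z * ψ z + r z ^ 2 * deriv ψ z)
        = -(k * (r z * lam z)) := by linear_combination r z * h6
    nlinarith [mul_pos (mul_pos h.k_pos hrp) hlp]
  have hmono : StrictMonoOn f (Set.Ico (-1 : ℝ) 0) := by
    apply strictMonoOn_of_deriv_pos (convex_Ico _ _) hcont
    rwa [interior_Ico]
  intro z hz
  rcases eq_or_lt_of_le hz.1 with he | hgt
  · rw [← he, h.init_ψ]
    have := h.k_pos
    linarith
  · have hzIoo : z ∈ Set.Ioo (-1 : ℝ) 0 := ⟨hgt, hz.2⟩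
    have hlt : f (-1) < f z :=
      hmono ⟨le_refl _, by norm_num⟩ hz hgt
    have hf1 : f (-1) = 0 := by simp [hfdef, h.init_r]
    rw [hf1] at hlt
    simp only [hfdef] at hlt
    have hrp := h.r_pos z hzIoo
    nlinarith [mul_pos hrp hrp, hlt]
end

section
/- Assume the self-similar ODE system, and assume in addition that lim_{ẑ→0⁻} μ(ẑ) = k²/(1+k²). Then for all ẑ ∈ [-1,0): ν(ẑ) ≤ −1/2; 1/2 ≤ λ(ẑ) ≤ (1/2)|ẑ|^{−k²}; (1/2)(1−|ẑ|) ≤ r(ẑ) ≤ (1/(2q_k))(1−|ẑ|^{q_k}); 1 ≤ Ω(ẑ)² ≤ |ẑ|^{−k²}; and 0 ≤ m(ẑ) ≤ k². -/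
open Real Set Filter Topology

open Real Set Filter Topology

lemma mono_aux {f : ℝ → ℝ} {a b : ℝ} (hab : a ≤ b)
    (hc : ContinuousOn f (Icc a b))
    (hd : ∀ x ∈ Ioo a b, ∃ d, HasDerivAt f d x ∧ 0 ≤ d) :
    f a ≤ f b := by
  have hmono : MonotoneOn f (Icc a b) := by
    apply monotoneOn_of_deriv_nonneg (convex_Icc a b) hc
    · intro x hx
      rw [interior_Icc] at hx
      obtain ⟨d, hd', _⟩ := hd x hx
      exact hd'.differentiableAt.differentiableWithinAt
    · intro x hx
      rw [interior_Icc] at hx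
      obtain ⟨d, hd', h0⟩ := hd x hx
      rw [hd'.deriv]; exact h0
  exact hmono (left_mem_Icc.2 hab) (right_mem_Icc.2 hab) hab

lemma anti_aux {f : ℝ → ℝ} {a b : ℝ} (hab : a ≤ b)
    (hc : ContinuousOn f (Icc a b))
    (hd : ∀ x ∈ Ioo a b, ∃ d, HasDerivAt f d x ∧ d ≤ 0) :
    f b ≤ f a := by
  have h2 : (fun x => -f x) a ≤ (fun x => -f x) b := by
    apply mono_aux hab hc.neg
    intro x hx
    obtain ⟨d, hd', h0⟩ := hd x hx
    exact ⟨-d, hd'.neg, by linarith⟩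
  simp only [neg_le_neg_iff] at h2
  exact h2

lemma strict_mono_aux {f : ℝ → ℝ} {a b : ℝ} (hab : a < b)
    (hc : ContinuousOn f (Icc a b))
    (hd : ∀ x ∈ Ioo a b, ∃ d, HasDerivAt f d x ∧ 0 < d) :
    f a < f b := by
  have hmono : StrictMonoOn f (Icc a b) := by
    apply strictMonoOn_of_deriv_pos (convex_Icc a b) hc
    intro x hx
    rw [interior_Icc] at hx
    obtain ⟨d, hd', h0⟩ := hd x hx
    rw [hd'.deriv]; exact h0
  exact hmono (left_mem_Icc.2 hab.le) (right_mem_Icc.2 hab.le) hab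

lemma arrival_aux {f : ℝ → ℝ} {a b d : ℝ} (hab : a < b)
    (hd : HasDerivAt f d b) (hpos : ∀ y ∈ Ioo a b, 0 < f y) (hb : f b = 0) :
    d ≤ 0 := by
  have hslope : Tendsto (slope f b) (𝓝[<] b) (𝓝 d) := by
    have := hasDerivAt_iff_tendsto_slope.1 hd
    exact this.mono_left (nhdsWithin_mono b (fun y hy => ne_of_lt hy))
  have hev : ∀ᶠ y in 𝓝[<] b, slope f b y ≤ 0 := by
    filter_upwards [Ioo_mem_nhdsLT_of_mem (right_mem_Ioc.2 hab)] with y hy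
    have h1 : 0 < f y := hpos y hy
    have h2 : y - b < 0 := by
      have := hy.2; simp only [mem_Ioo] at hy; linarith [hy.2]
    rw [slope_def_field, hb]
    have h4 : (f y - 0) / (y - b) = f y / (y - b) := by ring_nf
    rw [h4]
    exact le_of_lt (div_neg_of_pos_of_neg h1 h2)
  exact le_of_tendsto hslope hev

lemma hasDerivAt_negrpow {c z : ℝ} (hz : z < 0) :
    HasDerivAt (fun y : ℝ => (-y) ^ c) (-(c * (-z) ^ (c - 1))) z := by
  have h1 : HasDerivAt (fun y : ℝ => -y) (-1) z := (hasDerivAt_id z).neg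
  have h2 : HasDerivAt (fun x : ℝ => x ^ c) (c * (-z) ^ (c - 1)) (-z) :=
    Real.hasDerivAt_rpow_const (Or.inl (by linarith))
  have := h2.comp z h1
  simpa [Function.comp_def] using this


noncomputable def Wf (k : ℝ) (ψ : ℝ → ℝ) (z : ℝ) : ℝ := z * ψ z + k / 2

noncomputable def Gf (k : ℝ) (r lam ψ : ℝ → ℝ) (z : ℝ) : ℝ :=
  2 * k * lam z * (-z) * (z * ψ z + k / 2) - r z * (z * ψ z) ^ 2

namespace SSS

variable {k : ℝ} {r ν lam Ω m ψ : ℝ → ℝ}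

lemma hasDerivAt_r (h : SSS k r ν lam Ω m ψ) {z : ℝ} (hz : z ∈ Ioo (-1:ℝ) 0) :
    HasDerivAt r (lam z) z := by
  have := (h.diff_r z hz).hasDerivAt
  rwa [h.eq1 z hz] at this

lemma dlam_sq (h : SSS k r ν lam Ω m ψ) {z : ℝ} (hz : z ∈ Ioo (-1:ℝ) 0) :
    deriv lam z * z ^ 2 = Gf k r lam ψ z := by
  have h2 := h.eq2 z hz
  have h10 := h.alg10 z hz
  have hrne : r z ≠ 0 := ne_of_gt (h.r_pos z hz)
  have key : r z * (z * deriv lam z)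
      = r z * (-(r z * z * ψ z ^ 2 + 2 * k * z * lam z * ψ z + k ^ 2 * lam z)) := by
    linear_combination h2 - h10
  have hz2 := mul_left_cancel₀ hrne key
  unfold Gf
  linear_combination z * hz2

lemma zdpsi (h : SSS k r ν lam Ω m ψ) {z : ℝ} (hz : z ∈ Ioo (-1:ℝ) 0) :
    r z * (z * deriv ψ z) = -(lam z * (2 * (z * ψ z) + k)) := by
  have h6 := h.eq6 z hz
  linear_combination h6

lemma hasDerivAt_W (h : SSS k r ν lam Ω m ψ) {z : ℝ} (hz : z ∈ Ioo (-1:ℝ) 0) :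
    HasDerivAt (Wf k ψ) (ψ z + z * deriv ψ z) z := by
  have hψ := (h.diff_ψ z hz).hasDerivAt
  have h1 : HasDerivAt (fun y => y * ψ y) (1 * ψ z + z * deriv ψ z) z :=
    (hasDerivAt_id z).mul hψ
  have h2 := h1.add_const (k / 2)
  rw [one_mul] at h2; exact h2

lemma contW (h : SSS k r ν lam Ω m ψ) : ContinuousOn (Wf k ψ) (Ico (-1:ℝ) 0) := by
  unfold Wf
  exact (continuousOn_id.mul h.cont_ψ).add continuousOn_const

lemma contG (h : SSS k r ν lam Ω m ψ) : ContinuousOn (Gf k r lam ψ) (Ico (-1:ℝ) 0) := by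
  unfold Gf
  apply ContinuousOn.sub
  · exact ((continuousOn_const.mul h.cont_lam).mul continuousOn_id.neg).mul
      ((continuousOn_id.mul h.cont_ψ).add continuousOn_const)
  · exact h.cont_r.mul ((continuousOn_id.mul h.cont_ψ).pow 2)

set_option maxHeartbeats 1600000 in
lemma segment (h : SSS k r ν lam Ω m ψ) :
    ∃ δ : ℝ, 0 < δ ∧ δ ≤ 1/25 ∧
      ∀ z ∈ Ioo (-1:ℝ) (-1+δ), 0 < ψ z ∧ 0 < Wf k ψ z ∧ 0 < Gf k r lam ψ z := by
  have hk := h.k_pos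
  have hm1 : (-1:ℝ) ∈ Ico (-1:ℝ) 0 := by constructor <;> norm_num
  have hlam : Tendsto lam (𝓝[Ico (-1:ℝ) 0] (-1)) (𝓝 (1/2)) := by
    have := (h.cont_lam (-1) hm1)
    rwa [ContinuousWithinAt, h.init_lam] at this
  have hpsi : Tendsto ψ (𝓝[Ico (-1:ℝ) 0] (-1)) (𝓝 (k/2)) := by
    have := (h.cont_ψ (-1) hm1)
    rwa [ContinuousWithinAt, h.init_ψ] at this
  have ev1 : ∀ᶠ z in 𝓝[Ico (-1:ℝ) 0] (-1), lam z ∈ Ioo (12/25 : ℝ) (13/25) :=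
    hlam (Ioo_mem_nhds (by norm_num) (by norm_num))
  have ev2 : ∀ᶠ z in 𝓝[Ico (-1:ℝ) 0] (-1), ψ z ∈ Ioo (12*k/25 : ℝ) (13*k/25) :=
    hpsi (Ioo_mem_nhds (by nlinarith) (by nlinarith))
  obtain ⟨ε, hε, hball⟩ := Metric.mem_nhdsWithin_iff.1 (ev1.and ev2)
  set δ : ℝ := min ε (1/25) with hδdef
  have hδ0 : 0 < δ := lt_min hε (by norm_num)
  have hδ25 : δ ≤ 1/25 := min_le_right _ _
  refine ⟨δ, hδ0, hδ25, ?_⟩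
  -- the pointwise bounds on the segment
  have hbnd : ∀ y ∈ Ioo (-1:ℝ) (-1+δ),
      12/25 ≤ lam y ∧ lam y ≤ 13/25 ∧ 12*k/25 ≤ ψ y ∧ ψ y ≤ 13*k/25 := by
    intro y hy
    have hyI : y ∈ Ico (-1:ℝ) 0 := ⟨hy.1.le, by nlinarith [hy.2, hδ25]⟩
    have hyb : y ∈ Metric.ball (-1:ℝ) ε := by
      rw [Metric.mem_ball, Real.dist_eq]
      have h1 : y - (-1) < δ := by linarith [hy.2]
      have h2 : 0 < y - (-1) := by linarith [hy.1]
      rw [abs_of_pos h2]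
      exact lt_of_lt_of_le h1 (min_le_left _ _)
    have := hball ⟨hyb, hyI⟩
    exact ⟨this.1.1.le, this.1.2.le, this.2.1.le, this.2.2.le⟩
  intro z hz
  have hz0 : z < 0 := by nlinarith [hz.2, hδ25]
  have hzI : z ∈ Ioo (-1:ℝ) 0 := ⟨hz.1, hz0⟩
  have hzIco : Icc (-1:ℝ) z ⊆ Ico (-1:ℝ) 0 := fun y hy => ⟨hy.1, lt_of_le_of_lt hy.2 hz0⟩
  have hrz : 0 < r z := h.r_pos z hzI
  obtain ⟨hl1, hl2, hp1, hp2⟩ := hbnd z hz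
  have hψpos : 0 < ψ z := lt_of_lt_of_le (by nlinarith) hp1
  -- step: W z ≥ (4k/13) r z via monotonicity of r² W - (4k/13) r³
  have hWr : (4*k/13) * r z ≤ Wf k ψ z := by
    have hmono : (fun y => (r y)^2 * Wf k ψ y - (4*k/13) * (r y)^3) (-1)
        ≤ (fun y => (r y)^2 * Wf k ψ y - (4*k/13) * (r y)^3) z := by
      apply mono_aux (f := fun y => (r y)^2 * Wf k ψ y - (4*k/13) * (r y)^3) hzI.1.le
      · apply ContinuousOn.sub
        · exact ((h.cont_r.mono hzIco).pow 2).mul (h.contW.mono hzIco)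
        · exact continuousOn_const.mul ((h.cont_r.mono hzIco).pow 3)
      · intro x hx
        have hxI : x ∈ Ioo (-1:ℝ) 0 := ⟨hx.1, lt_trans hx.2 hz0⟩
        have hxseg : x ∈ Ioo (-1:ℝ) (-1+δ) := ⟨hx.1, lt_trans hx.2 hz.2⟩
        obtain ⟨ha1, ha2, hb1, hb2⟩ := hbnd x hxseg
        have hrd := h.hasDerivAt_r hxI
        have hWd := h.hasDerivAt_W hxI
        have h1 : HasDerivAt (fun y => (r y)^2 * Wf k ψ y)
            (2 * r x ^ 1 * lam x * Wf k ψ x + (r x)^2 * (ψ x + x * deriv ψ x)) x :=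
          ((hrd.pow 2).mul hWd)
        have h2 : HasDerivAt (fun y => (4*k/13) * (r y)^3)
            ((4*k/13) * (3 * r x ^ 2 * lam x)) x := ((hrd.pow 3).const_mul _)
        refine ⟨_, h1.sub h2, ?_⟩
        have hzd := h.zdpsi hxI
        have hkey : 2 * r x ^ 1 * lam x * Wf k ψ x + (r x)^2 * (ψ x + x * deriv ψ x)
            - (4*k/13) * (3 * r x ^ 2 * lam x)
            = (r x)^2 * ψ x - (12*k/13) * ((r x)^2 * lam x) := by
          unfold Wf
          linear_combination r x * hzd
        rw [hkey]
        have hfac : 0 ≤ ψ x - (12*k/13) * lam x := by nlinarith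
        nlinarith [sq_nonneg (r x)]
    have hW1 : Wf k ψ (-1) = 0 := by unfold Wf; rw [h.init_ψ]; ring
    simp only [h.init_r, hW1] at hmono
    have hmono' : (4*k/13) * (r z)^3 ≤ (r z)^2 * Wf k ψ z := by linarith [hmono]
    have hr2 : 0 < (r z)^2 := by positivity
    nlinarith [hmono']
  have hWpos : 0 < Wf k ψ z := by
    have h413 : (0:ℝ) < 4*k/13 * r z := mul_pos (by linarith) hrz
    linarith
  refine ⟨hψpos, hWpos, ?_⟩
  -- G > 0
  have hz24 : (24/25 : ℝ) ≤ -z := by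
    have := hz.2
    have : z < -1 + 1/25 := by linarith [hδ25]
    linarith
  have hzsq : z^2 ≤ 1 := by nlinarith [hz.1, hz0]
  have hpsq : (z * ψ z)^2 ≤ (13*k/25)^2 := by
    have h1 : (z*ψ z)^2 = z^2 * (ψ z)^2 := by ring
    have h2 : (ψ z)^2 ≤ (13*k/25)^2 := by nlinarith
    nlinarith [sq_nonneg (ψ z)]
  unfold Gf
  have e2 : (12/25:ℝ)*(24/25) ≤ lam z * (-z) := by nlinarith
  have e3 : 2*k*((12/25)*(24/25))*((4*k/13)*r z) ≤ 2*k*(lam z*(-z))*((4*k/13)*r z) := by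
    have : (0:ℝ) ≤ 2*k*((4*k/13)*r z) := by positivity
    nlinarith
  have e4 : 2*k*(lam z*(-z))*((4*k/13)*r z) ≤ 2*k*(lam z*(-z))*(Wf k ψ z) := by
    have hpos : (0:ℝ) ≤ 2*k*(lam z*(-z)) := by nlinarith
    nlinarith
  have e5 : r z * (z*ψ z)^2 ≤ r z * (13*k/25)^2 := by nlinarith
  have e6 : 2*k*((12/25:ℝ)*(24/25))*((4*k/13)*r z) - r z * (13*k/25)^2 > 0 := by
    have : 2*k*((12/25:ℝ)*(24/25))*((4*k/13)*r z) - r z * (13*k/25)^2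
        = (r z * k^2) * (2304/8125 - 169/625) := by ring
    rw [this]
    have : (2304/8125 : ℝ) - 169/625 = 107/8125 := by norm_num
    rw [this]
    positivity
  have egoal : 2*k*lam z*(-z)*(z*ψ z+k/2) = 2*k*(lam z*(-z))*(Wf k ψ z) := by
    unfold Wf; ring
  rw [egoal]
  linarith [e3, e4, e5, e6]

lemma lam_ge (h : SSS k r ν lam Ω m ψ) {b : ℝ} (hb : b ∈ Ioo (-1:ℝ) 0)
    (hG : ∀ y ∈ Ioo (-1:ℝ) b, 0 < Gf k r lam ψ y) : 1/2 ≤ lam b := by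
  have hsub : Icc (-1:ℝ) b ⊆ Ico (-1:ℝ) 0 := fun y hy => ⟨hy.1, lt_of_le_of_lt hy.2 hb.2⟩
  have : lam (-1) < lam b := by
    apply strict_mono_aux hb.1 (h.cont_lam.mono hsub)
    intro x hx
    have hxI : x ∈ Ioo (-1:ℝ) 0 := ⟨hx.1, lt_trans hx.2 hb.2⟩
    refine ⟨deriv lam x, (h.diff_lam x hxI).hasDerivAt, ?_⟩
    have h1 := h.dlam_sq hxI
    have h2 := hG x hx
    have hx2 : 0 < x^2 := by nlinarith [hx.2, hb.2]
    nlinarith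
  rw [h.init_lam] at this
  linarith

lemma left_nonneg_aux {f : ℝ → ℝ} {a b : ℝ} (hab : a < b) (hc : ContinuousAt f b)
    (hpos : ∀ y ∈ Ioo a b, 0 < f y) : 0 ≤ f b := by
  have ht : Tendsto f (𝓝[<] b) (𝓝 (f b)) := (hc.continuousWithinAt).tendsto
  apply ge_of_tendsto ht
  filter_upwards [Ioo_mem_nhdsLT_of_mem (right_mem_Ioc.2 hab)] with y hy
  exact (hpos y hy).le

set_option maxHeartbeats 1600000 in
lemma inv (h : SSS k r ν lam Ω m ψ) :
    ∀ z ∈ Ioo (-1:ℝ) 0, 0 < ψ z ∧ 0 < Wf k ψ z ∧ 0 < Gf k r lam ψ z := by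
  have hk := h.k_pos
  obtain ⟨δ, hδ0, hδ25, hseg⟩ := h.segment
  set P : ℝ → Prop := fun y => 0 < ψ y ∧ 0 < Wf k ψ y ∧ 0 < Gf k r lam ψ y with hPdef
  show ∀ z ∈ Ioo (-1:ℝ) 0, P z
  by_contra hcon
  push_neg at hcon
  obtain ⟨a₀, ha₀, hnP⟩ := hcon
  have ha₀δ : -1 + δ ≤ a₀ := by
    by_contra hlt
    push_neg at hlt
    exact hnP (hseg a₀ ⟨ha₀.1, hlt⟩)
  set A : Set ℝ := {y | y ∈ Icc (-1+δ) a₀ ∧ ¬ P y} with hAdef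
  have hA0 : a₀ ∈ A := ⟨⟨ha₀δ, le_refl _⟩, hnP⟩
  have hbdd : BddBelow A := ⟨-1+δ, fun y hy => hy.1.1⟩
  have hIccsub : Icc (-1+δ:ℝ) a₀ ⊆ Ico (-1:ℝ) 0 :=
    fun y hy => ⟨by linarith [hy.1], lt_of_le_of_lt hy.2 ha₀.2⟩
  have hclosed : IsClosed A := by
    have hAeq : A = (Icc (-1+δ:ℝ) a₀ ∩ ψ ⁻¹' (Iic 0)) ∪
        ((Icc (-1+δ:ℝ) a₀ ∩ (Wf k ψ) ⁻¹' (Iic 0)) ∪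
         (Icc (-1+δ:ℝ) a₀ ∩ (Gf k r lam ψ) ⁻¹' (Iic 0))) := by
      ext y
      simp only [hAdef, hPdef, mem_setOf_eq, mem_union, mem_inter_iff, mem_preimage,
        mem_Iic, not_and_or, not_lt]
      tauto
    rw [hAeq]
    have hIc : IsClosed (Icc (-1+δ:ℝ) a₀) := isClosed_Icc
    refine IsClosed.union ?_ (IsClosed.union ?_ ?_)
    · exact (h.cont_ψ.mono hIccsub).preimage_isClosed_of_isClosed hIc isClosed_Iic
    · exact ((h.contW).mono hIccsub).preimage_isClosed_of_isClosed hIc isClosed_Iic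
    · exact ((h.contG).mono hIccsub).preimage_isClosed_of_isClosed hIc isClosed_Iic
  set z₀ : ℝ := sInf A with hz₀def
  have hz₀A : z₀ ∈ A := hclosed.csInf_mem ⟨a₀, hA0⟩ hbdd
  have hz₀I : z₀ ∈ Ioo (-1:ℝ) 0 := by
    have h1 := hz₀A.1
    exact ⟨by linarith [h1.1], lt_of_le_of_lt h1.2 ha₀.2⟩
  have hbefore : ∀ y ∈ Ioo (-1:ℝ) z₀, P y := by
    intro y hy
    by_contra hnPy
    rcases lt_or_ge y (-1+δ) with hc1 | hc2
    · exact hnPy (hseg y ⟨hy.1, hc1⟩)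
    · have hyA : y ∈ A := ⟨⟨hc2, le_trans hy.2.le hz₀A.1.2⟩, hnPy⟩
      have := csInf_le hbdd hyA
      rw [← hz₀def] at this
      linarith [hy.2]
  have hrz : 0 < r z₀ := h.r_pos z₀ hz₀I
  have hrne : r z₀ ≠ 0 := ne_of_gt hrz
  have hzne : z₀ ≠ 0 := ne_of_lt hz₀I.2
  have hIcoNhds : Ico (-1:ℝ) 0 ∈ 𝓝 z₀ := Ico_mem_nhds hz₀I.1 hz₀I.2
  have hψ0 : 0 ≤ ψ z₀ :=
    left_nonneg_aux hz₀I.1 (h.cont_ψ.continuousAt hIcoNhds) (fun y hy => (hbefore y hy).1)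
  have hW0 : 0 ≤ Wf k ψ z₀ :=
    left_nonneg_aux hz₀I.1 (h.contW.continuousAt hIcoNhds) (fun y hy => (hbefore y hy).2.1)
  have hG0 : 0 ≤ Gf k r lam ψ z₀ :=
    left_nonneg_aux hz₀I.1 (h.contG.continuousAt hIcoNhds) (fun y hy => (hbefore y hy).2.2)
  have hlamz : 1/2 ≤ lam z₀ := lam_ge h hz₀I (fun y hy => (hbefore y hy).2.2)
  have hnPz : ¬ P z₀ := hz₀A.2
  have hψd : HasDerivAt ψ (deriv ψ z₀) z₀ := (h.diff_ψ z₀ hz₀I).hasDerivAt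
  have hzd := h.zdpsi hz₀I
  -- case 1 : ψ z₀ = 0
  rcases eq_or_lt_of_le hψ0 with hψz | hψz
  · have hψz : ψ z₀ = 0 := hψz.symm
    have hzdψneg : r z₀ * (z₀ * deriv ψ z₀) = -(lam z₀ * k) := by
      rw [hzd, hψz]; ring
    have h1 : z₀ * deriv ψ z₀ < 0 := by
      by_contra hx
      push_neg at hx
      nlinarith
    have h2 : 0 < deriv ψ z₀ := by
      by_contra hx
      push_neg at hx
      nlinarith [hz₀I.2]
    have := arrival_aux hz₀I.1 hψd (fun y hy => (hbefore y hy).1) hψz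
    linarith
  -- case 2 : W z₀ = 0
  rcases eq_or_lt_of_le hW0 with hWz | hWz
  · have hWz : Wf k ψ z₀ = 0 := hWz.symm
    have h2W : 2 * (z₀ * ψ z₀) + k = 0 := by
      have : Wf k ψ z₀ = z₀ * ψ z₀ + k/2 := rfl
      rw [this] at hWz; linarith
    have hzdψ0 : r z₀ * (z₀ * deriv ψ z₀) = 0 := by rw [hzd, h2W]; ring
    have h1 : z₀ * deriv ψ z₀ = 0 := by
      rcases mul_eq_zero.1 hzdψ0 with h' | h'
      · exact absurd h' hrne
      · exact h'
    have hWd := h.hasDerivAt_W hz₀I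
    have := arrival_aux hz₀I.1 hWd (fun y hy => (hbefore y hy).2.1) hWz
    rw [h1] at this
    linarith
  -- case 3 : G z₀ = 0
  have hGz : Gf k r lam ψ z₀ = 0 := by
    by_contra hGne
    exact hnPz ⟨hψz, hWz, lt_of_le_of_ne hG0 (Ne.symm hGne)⟩
  -- build derivative of G at z₀
  have hlamd : HasDerivAt lam (deriv lam z₀) z₀ := (h.diff_lam z₀ hz₀I).hasDerivAt
  have hrd := h.hasDerivAt_r hz₀I
  have hpd : HasDerivAt (fun y => y * ψ y) (1 * ψ z₀ + z₀ * deriv ψ z₀) z₀ :=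
    (hasDerivAt_id z₀).mul hψd
  have h1 : HasDerivAt (fun y => lam y * (-y)) (deriv lam z₀ * (-z₀) + lam z₀ * (-1)) z₀ :=
    hlamd.mul ((hasDerivAt_id z₀).neg)
  have h2 : HasDerivAt (fun y => y * ψ y + k/2) (1 * ψ z₀ + z₀ * deriv ψ z₀) z₀ :=
    hpd.add_const _
  have h3 : HasDerivAt (fun y => (lam y * (-y)) * (y * ψ y + k/2))
      ((deriv lam z₀ * (-z₀) + lam z₀ * (-1)) * (z₀ * ψ z₀ + k/2)
        + (lam z₀ * (-z₀)) * (1 * ψ z₀ + z₀ * deriv ψ z₀)) z₀ := h1.mul h2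
  have h4 : HasDerivAt (fun y => 2 * k * (lam y * (-y) * (y * ψ y + k/2)))
      (2 * k * ((deriv lam z₀ * (-z₀) + lam z₀ * (-1)) * (z₀ * ψ z₀ + k/2)
        + (lam z₀ * (-z₀)) * (1 * ψ z₀ + z₀ * deriv ψ z₀))) z₀ := h3.const_mul _
  have h5 : HasDerivAt (fun y => (y * ψ y)^2)
      (2 * (z₀ * ψ z₀)^1 * (1 * ψ z₀ + z₀ * deriv ψ z₀)) z₀ := hpd.pow 2
  have h6 : HasDerivAt (fun y => r y * (y * ψ y)^2)
      (lam z₀ * (z₀ * ψ z₀)^2 + r z₀ * (2 * (z₀ * ψ z₀)^1 * (1 * ψ z₀ + z₀ * deriv ψ z₀))) z₀ :=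
    hrd.mul h5
  have hGd : HasDerivAt (Gf k r lam ψ)
      (2 * k * ((deriv lam z₀ * (-z₀) + lam z₀ * (-1)) * (z₀ * ψ z₀ + k/2)
        + (lam z₀ * (-z₀)) * (1 * ψ z₀ + z₀ * deriv ψ z₀))
       - (lam z₀ * (z₀ * ψ z₀)^2 + r z₀ * (2 * (z₀ * ψ z₀)^1 * (1 * ψ z₀ + z₀ * deriv ψ z₀)))) z₀ := by
    have := h4.sub h6
    have heq : Gf k r lam ψ = fun y => 2 * k * (lam y * (-y) * (y * ψ y + k/2)) - r y * (y * ψ y)^2 := by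
      funext y; unfold Gf; ring
    rw [heq]
    exact this
  -- key algebraic identity
  have hdlam := h.dlam_sq hz₀I
  rw [hGz] at hdlam
  have key : (2 * k * ((deriv lam z₀ * (-z₀) + lam z₀ * (-1)) * (z₀ * ψ z₀ + k/2)
        + (lam z₀ * (-z₀)) * (1 * ψ z₀ + z₀ * deriv ψ z₀))
       - (lam z₀ * (z₀ * ψ z₀)^2 + r z₀ * (2 * (z₀ * ψ z₀)^1 * (1 * ψ z₀ + z₀ * deriv ψ z₀))))
       * (r z₀ * z₀)
      = lam z₀ * (k + z₀ * ψ z₀)^2 * (r z₀ * z₀)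
        + (Gf k r lam ψ z₀) * (2 * r z₀ - 2 * lam z₀ * z₀) := by
    unfold Gf
    linear_combination (-2) * k * (z₀ * ψ z₀ + k/2) * r z₀ * hdlam
      + (2 * k * lam z₀ * (-z₀) - 2 * r z₀ * (z₀ * ψ z₀)) * z₀ * hzd
  rw [hGz, zero_mul, add_zero] at key
  have harr := arrival_aux hz₀I.1 hGd (fun y hy => (hbefore y hy).2.2) hGz
  -- positivity of lam * (k + p)^2
  have hkp : k/2 < k + z₀ * ψ z₀ := by
    have : Wf k ψ z₀ = z₀ * ψ z₀ + k/2 := rfl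
    rw [this] at hWz
    linarith
  have hEpos : 0 < lam z₀ * (k + z₀ * ψ z₀)^2 := by
    have : 0 < (k + z₀ * ψ z₀)^2 := by nlinarith
    nlinarith
  have hrzneg : r z₀ * z₀ < 0 := mul_neg_of_pos_of_neg hrz hz₀I.2
  nlinarith [key, harr, hEpos, hrzneg]

lemma lam_lower (h : SSS k r ν lam Ω m ψ) : ∀ z ∈ Ico (-1:ℝ) 0, 1/2 ≤ lam z := by
  intro z hz
  rcases eq_or_lt_of_le hz.1 with hz1 | hz1
  · rw [← hz1, h.init_lam]
  · exact lam_ge h ⟨hz1, hz.2⟩ (fun y hy => (h.inv y ⟨hy.1, lt_trans hy.2 hz.2⟩).2.2)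

lemma G_le (h : SSS k r ν lam Ω m ψ) {x : ℝ} (hx : x ∈ Ioo (-1:ℝ) 0) :
    Gf k r lam ψ x ≤ k^2 * lam x * (-x) := by
  have hk := h.k_pos
  obtain ⟨hψ, hW, hG⟩ := h.inv x hx
  have hlam : 1/2 ≤ lam x := h.lam_lower x ⟨hx.1.le, hx.2⟩
  have hr : 0 < r x := h.r_pos x hx
  have hp : x * ψ x < 0 := mul_neg_of_neg_of_pos hx.2 hψ
  unfold Gf
  nlinarith [sq_nonneg (x * ψ x), mul_pos hk (mul_pos (lt_of_lt_of_le (by norm_num) hlam) (neg_pos.2 hx.2))]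

lemma lam_rpow_le (h : SSS k r ν lam Ω m ψ) : ∀ z ∈ Ico (-1:ℝ) 0,
    lam z * (-z) ^ (k^2) ≤ 1/2 := by
  intro z hz
  rcases eq_or_lt_of_le hz.1 with hz1 | hz1
  · rw [← hz1, h.init_lam]
    norm_num [Real.one_rpow]
  · have hsub : Icc (-1:ℝ) z ⊆ Ico (-1:ℝ) 0 := fun y hy => ⟨hy.1, lt_of_le_of_lt hy.2 hz.2⟩
    have hanti : (fun y => lam y * (-y) ^ (k^2)) z ≤ (fun y => lam y * (-y) ^ (k^2)) (-1) := by
      apply anti_aux (f := fun y => lam y * (-y) ^ (k^2)) hz1.le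
      · apply ContinuousOn.mul (h.cont_lam.mono hsub)
        exact (continuousOn_id.neg).rpow_const (fun x _ => Or.inr (sq_nonneg k))
      · intro x hx
        have hxI : x ∈ Ioo (-1:ℝ) 0 := ⟨hx.1, lt_trans hx.2 hz.2⟩
        have hx0 : 0 < -x := neg_pos.2 hxI.2
        have hlamd : HasDerivAt lam (deriv lam x) x := (h.diff_lam x hxI).hasDerivAt
        have hD := hlamd.mul (hasDerivAt_negrpow (c := k^2) hxI.2)
        refine ⟨_, hD, ?_⟩
        have hsplit : (-x) ^ (k^2) = (-x) ^ (k^2 - 1) * (-x) := by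
          have hs1 : (-x) ^ (k^2 - 1) * (-x) ^ (1:ℝ) = (-x) ^ (k^2) := by
            rw [← Real.rpow_add hx0]; norm_num
          rw [← hs1, Real.rpow_one]
        have hdlam := h.dlam_sq hxI
        have hGle := h.G_le hxI
        have hlam : 1/2 ≤ lam x := h.lam_lower x ⟨hxI.1.le, hxI.2⟩
        have hfac : deriv lam x * (-x) - k^2 * lam x ≤ 0 := by
          have h1 : (deriv lam x * (-x)) * (-x) ≤ (k^2 * lam x) * (-x) := by
            have : deriv lam x * (-x) * (-x) = deriv lam x * x^2 := by ring
            rw [this, hdlam]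
            nlinarith [hGle]
          nlinarith [h1, hx0]
        have hpow_pos : 0 < (-x) ^ (k^2 - 1) := Real.rpow_pos_of_pos hx0 _
        have : deriv lam x * (-x) ^ (k^2) + lam x * -(k^2 * (-x) ^ (k^2 - 1))
            = (-x) ^ (k^2 - 1) * (deriv lam x * (-x) - k^2 * lam x) := by
          rw [hsplit]; ring
        rw [this]
        exact mul_nonpos_of_nonneg_of_nonpos hpow_pos.le hfac
    simp only at hanti
    rw [h.init_lam] at hanti
    calc lam z * (-z) ^ (k^2) ≤ 1/2 * (-(-1):ℝ) ^ (k^2) := hanti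
    _ = 1/2 := by norm_num [Real.one_rpow]

lemma lam_upper (h : SSS k r ν lam Ω m ψ) : ∀ z ∈ Ico (-1:ℝ) 0,
    lam z ≤ 1/2 * (-z) ^ (-(k^2)) := by
  intro z hz
  have hz0 : 0 < -z := neg_pos.2 hz.2
  have h1 := h.lam_rpow_le z hz
  have hpow : 0 < (-z) ^ (k^2) := Real.rpow_pos_of_pos hz0 _
  rw [Real.rpow_neg hz0.le, ← sub_nonneg]
  have he : 1/2 * ((-z) ^ (k^2))⁻¹ - lam z = (1/2 - lam z * (-z)^(k^2)) * ((-z) ^ (k^2))⁻¹ := by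
    field_simp
  rw [he]
  exact mul_nonneg (by linarith) (inv_nonneg.2 hpow.le)

lemma r_lower (h : SSS k r ν lam Ω m ψ) : ∀ z ∈ Ico (-1:ℝ) 0,
    (1/2) * (1 - (-z)) ≤ r z := by
  intro z hz
  have hmono : (fun y => r y - (1/2)*(y+1)) (-1) ≤ (fun y => r y - (1/2)*(y+1)) z := by
    apply mono_aux (f := fun y => r y - (1/2)*(y+1)) hz.1
    · have hsub : Icc (-1:ℝ) z ⊆ Ico (-1:ℝ) 0 := fun y hy => ⟨hy.1, lt_of_le_of_lt hy.2 hz.2⟩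
      exact (h.cont_r.mono hsub).sub (continuousOn_const.mul (continuousOn_id.add continuousOn_const))
    · intro x hx
      have hxI : x ∈ Ioo (-1:ℝ) 0 := ⟨hx.1, lt_trans hx.2 hz.2⟩
      have hd2 : HasDerivAt (fun y : ℝ => (1/2)*(y+1)) (1/2 : ℝ) x := by
        simpa using ((hasDerivAt_id x).add_const (1:ℝ)).const_mul (1/2:ℝ)
      refine ⟨lam x - 1/2, (h.hasDerivAt_r hxI).sub hd2, ?_⟩
      have := h.lam_lower x ⟨hxI.1.le, hxI.2⟩; linarith
  simp only [h.init_r] at hmono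
  have h2 : (0:ℝ) - (1/2)*((-1:ℝ)+1) = 0 := by norm_num
  rw [h2] at hmono
  linarith

lemma r_upper (h : SSS k r ν lam Ω m ψ) : ∀ z ∈ Ico (-1:ℝ) 0,
    r z ≤ (1 / (2 * (1 - k^2))) * (1 - (-z) ^ (1 - k^2)) := by
  intro z hz
  have hq : 0 < 1 - k^2 := by nlinarith [h.k_small]
  have hmono : (fun y => (1 - (-y)^(1-k^2)) / (2*(1-k^2)) - r y) (-1)
      ≤ (fun y => (1 - (-y)^(1-k^2)) / (2*(1-k^2)) - r y) z := by
    apply mono_aux (f := fun y => (1 - (-y)^(1-k^2)) / (2*(1-k^2)) - r y) hz.1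
    · have hsub : Icc (-1:ℝ) z ⊆ Ico (-1:ℝ) 0 := fun y hy => ⟨hy.1, lt_of_le_of_lt hy.2 hz.2⟩
      apply ContinuousOn.sub ?_ (h.cont_r.mono hsub)
      apply ContinuousOn.div_const
      exact continuousOn_const.sub ((continuousOn_id.neg).rpow_const (fun x _ => Or.inr hq.le))
    · intro x hx
      have hxI : x ∈ Ioo (-1:ℝ) 0 := ⟨hx.1, lt_trans hx.2 hz.2⟩
      have hx0 : 0 < -x := neg_pos.2 hxI.2
      have hd1 : HasDerivAt (fun y => (1 - (-y)^(1-k^2)) / (2*(1-k^2)))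
          ((1-k^2) * (-x)^((1-k^2)-1) / (2*(1-k^2))) x := by
        have : HasDerivAt (fun y => (1 - (-y)^(1-k^2)) / (2*(1-k^2)))
            (-(-((1-k^2) * (-x)^((1-k^2)-1))) / (2*(1-k^2))) x :=
          ((hasDerivAt_negrpow (c := 1-k^2) hxI.2).const_sub (1:ℝ)).div_const (2*(1-k^2))
        convert this using 1
        ring
      refine ⟨_, hd1.sub (h.hasDerivAt_r hxI), ?_⟩
      have he : (1-k^2) * (-x)^((1-k^2)-1) / (2*(1-k^2)) = 1/2 * (-x)^(-(k^2)) := by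
        rw [show (1-k^2)-1 = -(k^2) by ring]
        field_simp
      rw [he]
      have := h.lam_upper x ⟨hxI.1.le, hxI.2⟩
      linarith
  simp only [h.init_r] at hmono
  have h2 : (1 - (-(-1:ℝ))^(1-k^2)) / (2*(1-k^2)) - 0 = 0 := by
    norm_num [Real.one_rpow]
  rw [h2] at hmono
  have : (1 - (-z)^(1-k^2)) / (2*(1-k^2)) = (1 / (2 * (1 - k^2))) * (1 - (-z) ^ (1 - k^2)) := by
    ring
  linarith [hmono, this.symm.le]

lemma nu_bound (h : SSS k r ν lam Ω m ψ) : ∀ z ∈ Ico (-1:ℝ) 0, ν z ≤ -(1/2) := by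
  intro z hz
  rcases eq_or_lt_of_le hz.1 with hz1 | hz1
  · rw [← hz1, h.init_ν]
  · have hzI : z ∈ Ioo (-1:ℝ) 0 := ⟨hz1, hz.2⟩
    have h9 := h.alg9 z hzI
    have hlam := h.lam_lower z hz
    have hrl := h.r_lower z hz
    have hzlam : z * lam z ≤ z * (1/2) := by
      apply mul_le_mul_of_nonpos_left hlam (le_of_lt hzI.2)
    nlinarith [h9, hrl, hzlam]

lemma Om_sq_lower (h : SSS k r ν lam Ω m ψ) : ∀ z ∈ Ico (-1:ℝ) 0, 1 ≤ Ω z ^ 2 := by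
  intro z hz
  rcases eq_or_lt_of_le hz.1 with hz1 | hz1
  · rw [← hz1, h.init_Ω]; norm_num
  · have hzI : z ∈ Ioo (-1:ℝ) 0 := ⟨hz1, hz.2⟩
    have hsub : Icc (-1:ℝ) z ⊆ Ico (-1:ℝ) 0 := fun y hy => ⟨hy.1, lt_of_le_of_lt hy.2 hz.2⟩
    have hlamz := h.lam_lower z hz
    have hmono : (fun y => Ω y ^ 2 / lam y) (-1) ≤ (fun y => Ω y ^ 2 / lam y) z := by
      apply mono_aux (f := fun y => Ω y ^ 2 / lam y) hz.1
      · apply ContinuousOn.div ((h.cont_Ω.mono hsub).pow 2) (h.cont_lam.mono hsub)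
        intro y hy
        have := h.lam_lower y (hsub hy)
        linarith
      · intro x hx
        have hxI : x ∈ Ioo (-1:ℝ) 0 := ⟨hx.1, lt_trans hx.2 hz.2⟩
        have hΩpos := h.Ω_pos x hxI
        have hΩne : Ω x ≠ 0 := ne_of_gt hΩpos
        have hlamx := h.lam_lower x ⟨hxI.1.le, hxI.2⟩
        have hlamne : lam x ≠ 0 := by linarith
        have hΩd : HasDerivAt Ω (deriv Ω x) x := (h.diff_Ω x hxI).hasDerivAt
        have hlamd : HasDerivAt lam (deriv lam x) x := (h.diff_lam x hxI).hasDerivAt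
        have h5 := h.eq5 x hxI
        have h5' : 2 * lam x * deriv Ω x = Ω x * (deriv lam x + r x * ψ x ^ 2) := by
          have := congrArg (fun t => Ω x * t) h5
          field_simp at this
          linarith [this]
        have hD : HasDerivAt (fun y => Ω y ^ 2 / lam y)
            ((Ω x ^ 2 * (r x * ψ x ^ 2)) / lam x ^ 2) x := by
          have hD0 : HasDerivAt (fun y => Ω y ^ 2 / lam y)
              ((((2:ℕ):ℝ) * Ω x ^ (2-1) * deriv Ω x * lam x - Ω x ^ 2 * deriv lam x) / lam x ^ 2) x :=
            (hΩd.pow 2).div hlamd hlamne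
          convert hD0 using 1
          have hnum : ((2:ℕ):ℝ) * Ω x ^ (2-1) * deriv Ω x * lam x - Ω x ^ 2 * deriv lam x
              = Ω x ^ 2 * (r x * ψ x ^ 2) := by
            push_cast
            norm_num
            linear_combination Ω x * h5'
          rw [hnum]
        refine ⟨_, hD, ?_⟩
        have hrx := h.r_pos x hxI
        apply div_nonneg ?_ (by positivity)
        positivity
    simp only [h.init_Ω, h.init_lam] at hmono
    norm_num at hmono
    have h2 : 2 * lam z ≤ Ω z ^ 2 := by
      have hlampos : (0:ℝ) < lam z := by linarith
      rw [le_div_iff₀ hlampos] at hmono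
      linarith
    linarith

lemma Om_key (h : SSS k r ν lam Ω m ψ) {x : ℝ} (hx : x ∈ Ioo (-1:ℝ) 0) :
    (-x) * (deriv lam x + r x * ψ x ^ 2) = 2 * k * lam x * Wf k ψ x := by
  have hxne : -x ≠ 0 := ne_of_gt (neg_pos.2 hx.2)
  apply mul_left_cancel₀ hxne
  have hdlam := h.dlam_sq hx
  unfold Gf at hdlam
  unfold Wf
  linear_combination hdlam

lemma Om_sq_upper (h : SSS k r ν lam Ω m ψ) : ∀ z ∈ Ico (-1:ℝ) 0,
    Ω z ^ 2 ≤ (-z) ^ (-(k^2)) := by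
  intro z hz
  have hz0 : 0 < -z := neg_pos.2 hz.2
  rcases eq_or_lt_of_le hz.1 with hz1 | hz1
  · rw [← hz1, h.init_Ω]
    norm_num [Real.one_rpow]
  · have hzI : z ∈ Ioo (-1:ℝ) 0 := ⟨hz1, hz.2⟩
    have hsub : Icc (-1:ℝ) z ⊆ Ico (-1:ℝ) 0 := fun y hy => ⟨hy.1, lt_of_le_of_lt hy.2 hz.2⟩
    have hanti : (fun y => Ω y ^ 2 * (-y) ^ (k^2)) z
        ≤ (fun y => Ω y ^ 2 * (-y) ^ (k^2)) (-1) := by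
      apply anti_aux (f := fun y => Ω y ^ 2 * (-y) ^ (k^2)) hz1.le
      · exact ((h.cont_Ω.mono hsub).pow 2).mul
          ((continuousOn_id.neg).rpow_const (fun x _ => Or.inr (sq_nonneg k)))
      · intro x hx
        have hxI : x ∈ Ioo (-1:ℝ) 0 := ⟨hx.1, lt_trans hx.2 hz.2⟩
        have hx0 : 0 < -x := neg_pos.2 hxI.2
        have hΩpos := h.Ω_pos x hxI
        have hΩne : Ω x ≠ 0 := ne_of_gt hΩpos
        have hlamx := h.lam_lower x ⟨hxI.1.le, hxI.2⟩
        have hΩd : HasDerivAt Ω (deriv Ω x) x := (h.diff_Ω x hxI).hasDerivAt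
        have hD : HasDerivAt (fun y => Ω y ^ 2 * (-y) ^ (k^2))
            ((2 * Ω x ^ 1 * deriv Ω x) * (-x) ^ (k^2) + Ω x ^ 2 * -(k^2 * (-x) ^ (k^2-1))) x := by
          have hD0 : HasDerivAt (fun y => Ω y ^ 2 * (-y) ^ (k^2))
              ((((2:ℕ):ℝ) * Ω x ^ (2-1) * deriv Ω x) * (-x) ^ (k^2) + Ω x ^ 2 * -(k^2 * (-x) ^ (k^2-1))) x :=
            (hΩd.pow 2).mul (hasDerivAt_negrpow (c := k^2) hxI.2)
          convert hD0 using 1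
          norm_num
        refine ⟨_, hD, ?_⟩
        have hsplit : (-x) ^ (k^2) = (-x) ^ (k^2 - 1) * (-x) := by
          have hs1 : (-x) ^ (k^2 - 1) * (-x) ^ (1:ℝ) = (-x) ^ (k^2) := by
            rw [← Real.rpow_add hx0]; norm_num
          rw [← hs1, Real.rpow_one]
        have h5 := h.eq5 x hxI
        have h5' : 2 * lam x * deriv Ω x = Ω x * (deriv lam x + r x * ψ x ^ 2) := by
          have := congrArg (fun t => Ω x * t) h5
          field_simp at this
          linarith [this]
        have hkey := h.Om_key hxI
        -- target factorization
        have hfac : 2 * Ω x ^ 1 * deriv Ω x * (-x) ^ (k^2) + Ω x ^ 2 * -(k^2 * (-x) ^ (k^2-1))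
            = (-x) ^ (k^2-1) * ((2 * Ω x * deriv Ω x) * (-x) - k^2 * Ω x ^ 2) := by
          rw [hsplit]; ring
        rw [hfac]
        apply mul_nonpos_of_nonneg_of_nonpos (Real.rpow_pos_of_pos hx0 _).le
        -- need (2 Ω Ω')(-x) ≤ k² Ω²; multiply by lam x > 0
        have hlampos : 0 < lam x := by linarith
        have hW : Wf k ψ x ≤ k/2 := by
          have hψpos := (h.inv x hxI).1
          have : x * ψ x < 0 := mul_neg_of_neg_of_pos hxI.2 hψpos
          unfold Wf
          linarith
        have hmul : lam x * ((2 * Ω x * deriv Ω x) * (-x)) = Ω x ^ 2 * (2 * k * lam x * Wf k ψ x) := by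
          calc lam x * ((2 * Ω x * deriv Ω x) * (-x))
              = (2 * lam x * deriv Ω x) * (Ω x * (-x)) := by ring
            _ = (Ω x * (deriv lam x + r x * ψ x ^ 2)) * (Ω x * (-x)) := by rw [h5']
            _ = Ω x ^ 2 * ((-x) * (deriv lam x + r x * ψ x ^ 2)) := by ring
            _ = Ω x ^ 2 * (2 * k * lam x * Wf k ψ x) := by rw [hkey]
        have hk := h.k_pos
        have hle : Ω x ^ 2 * (2 * k * lam x * Wf k ψ x) ≤ lam x * (k^2 * Ω x ^ 2) := by
          have hOsq : 0 < Ω x ^ 2 := by positivity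
          have hstep : 2 * k * lam x * Wf k ψ x ≤ k^2 * lam x := by
            nlinarith [mul_nonneg (mul_pos hk hlampos).le (sub_nonneg.2 hW)]
          nlinarith [mul_le_mul_of_nonneg_left hstep hOsq.le]
        nlinarith [hmul, hle, hlampos]
    simp only [h.init_Ω] at hanti
    have h1 : Ω z ^ 2 * (-z) ^ (k^2) ≤ 1 := by
      have : ((1:ℝ))^2 * (-(-1:ℝ)) ^ (k^2) = 1 := by norm_num [Real.one_rpow]
      calc Ω z ^ 2 * (-z) ^ (k^2) ≤ (1:ℝ)^2 * (-(-1:ℝ)) ^ (k^2) := hanti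
      _ = 1 := this
    have hpow : 0 < (-z) ^ (k^2) := Real.rpow_pos_of_pos hz0 _
    rw [Real.rpow_neg hz0.le, ← sub_nonneg]
    have he : ((-z) ^ (k^2))⁻¹ - Ω z ^ 2 = (1 - Ω z ^ 2 * (-z)^(k^2)) * ((-z) ^ (k^2))⁻¹ := by
      field_simp
    rw [he]
    exact mul_nonneg (by linarith) (inv_nonneg.2 hpow.le)

lemma m_mono (h : SSS k r ν lam Ω m ψ) :
    ∀ x ∈ Ico (-1:ℝ) 0, ∀ y ∈ Ico (-1:ℝ) 0, x ≤ y → m x ≤ m y := by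
  intro x hx y hy hxy
  have hsub : Icc x y ⊆ Ico (-1:ℝ) 0 := fun t ht => ⟨le_trans hx.1 ht.1, lt_of_le_of_lt ht.2 hy.2⟩
  have := mono_aux (f := m) hxy (h.cont_m.mono hsub) ?_
  · exact this
  intro t ht
  have htI : t ∈ Ioo (-1:ℝ) 0 := ⟨lt_of_le_of_lt hx.1 ht.1, lt_trans ht.2 hy.2⟩
  have hdm : HasDerivAt m (deriv m t) t := (h.diff_m t htI).hasDerivAt
  refine ⟨_, hdm, ?_⟩
  have h7 := h.eq7 t htI
  have h11 := h.alg11 t htI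
  have hrt : 0 < r t := h.r_pos t htI
  have hrne : r t ≠ 0 := ne_of_gt hrt
  have hΩt : 0 < Ω t := h.Ω_pos t htI
  have hΩne : Ω t ≠ 0 := ne_of_gt hΩt
  have hlamt : 1/2 ≤ lam t := h.lam_lower t ⟨htI.1.le, htI.2⟩
  have hνt : ν t ≤ -(1/2) := h.nu_bound t ⟨htI.1.le, htI.2⟩
  have h11' : 2 * m t * Ω t ^ 2 = r t * (Ω t ^ 2 + 4 * ν t * lam t) := by
    field_simp at h11
    linarith [h11]
  have hfrac : (1 - 2 * m t / r t) = -(4 * ν t * lam t) / Ω t ^ 2 := by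
    rw [eq_div_iff (by positivity), sub_mul, div_mul_eq_mul_div, mul_comm,
      mul_div_assoc]
    rw [mul_div_assoc'] at *
    field_simp
    linarith [h11']
  have hnn : 0 ≤ (1 - 2 * m t / r t) := by
    rw [hfrac]
    apply div_nonneg _ (sq_nonneg _)
    nlinarith
  have hRHS : 0 ≤ (1 - 2 * m t / r t) * r t ^ 2 * ψ t ^ 2 := by
    apply mul_nonneg (mul_nonneg hnn (sq_nonneg _)) (sq_nonneg _)
  nlinarith [h7, hRHS, hlamt]

lemma m_nonneg (h : SSS k r ν lam Ω m ψ) : ∀ z ∈ Ico (-1:ℝ) 0, 0 ≤ m z := by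
  intro z hz
  have := h.m_mono (-1) (by constructor <;> norm_num) z hz hz.1
  rwa [h.init_m] at this

lemma m_le (h : SSS k r ν lam Ω m ψ)
    (hμ : Tendsto (fun z => 2 * m z / r z) (𝓝[<] (0:ℝ)) (𝓝 (k^2/(1+k^2)))) :
    ∀ z ∈ Ico (-1:ℝ) 0, m z ≤ k ^ 2 := by
  intro z hz
  have hk := h.k_pos
  have hq : (0:ℝ) < 1 - k^2 := by nlinarith [h.k_small]
  have hK : (0:ℝ) < k^2/(1+k^2) := div_pos (pow_pos hk 2) (by positivity)
  have hev1 : ∀ᶠ y in 𝓝[<] (0:ℝ), 2 * m y / r y < 2*(k^2/(1+k^2)) :=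
    hμ.eventually_lt_const (by linarith)
  have hev2 : Ioo z (0:ℝ) ∈ 𝓝[<] (0:ℝ) := Ioo_mem_nhdsLT_of_mem (right_mem_Ioc.2 hz.2)
  obtain ⟨y, hy1, hy2⟩ := (hev1.and hev2).exists
  have hyI : y ∈ Ico (-1:ℝ) 0 := ⟨le_trans hz.1 hy2.1.le, hy2.2⟩
  have hyIoo : y ∈ Ioo (-1:ℝ) 0 := ⟨lt_of_le_of_lt hz.1 hy2.1, hy2.2⟩
  have hmz : m z ≤ m y := h.m_mono z hz y hyI hy2.1.le
  have hry : 0 < r y := h.r_pos y hyIoo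
  have hmy0 : 0 ≤ m y := h.m_nonneg y hyI
  have hμy0 : 0 ≤ 2 * m y / r y := by positivity
  have hrup : r y ≤ 1/(2*(1-k^2)) := by
    have h1 := h.r_upper y hyI
    have h2 : 0 ≤ (-y) ^ (1-k^2) := Real.rpow_nonneg (by linarith [hyIoo.2]) _
    have h3 : (0:ℝ) < 1/(2*(1-k^2)) := by positivity
    nlinarith [h1, h2, h3]
  have hmyeq : m y = (2 * m y / r y) * r y / 2 := by field_simp
  have hprod : (2 * m y / r y) * r y ≤ (2*(k^2/(1+k^2))) * (1/(2*(1-k^2))) :=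
    mul_le_mul hy1.le hrup hry.le (by positivity)
  have heq2 : (2*(k^2/(1+k^2))) * (1/(2*(1-k^2))) / 2 = k^2 / (2*(1+k^2)*(1-k^2)) := by
    field_simp
  have hD1 : (1:ℝ) ≤ 2*(1+k^2)*(1-k^2) := by nlinarith [h.k_small, sq_nonneg k, sq_nonneg (k^2)]
  have hfin : k^2 / (2*(1+k^2)*(1-k^2)) ≤ k^2 := div_le_self (sq_nonneg k) hD1
  calc m z ≤ m y := hmz
  _ = (2 * m y / r y) * r y / 2 := hmyeq
  _ ≤ (2*(k^2/(1+k^2))) * (1/(2*(1-k^2))) / 2 := by linarith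
  _ = k^2 / (2*(1+k^2)*(1-k^2)) := heq2
  _ ≤ k^2 := hfin

end SSS

/-- Soft bounds on the self-similar background quantities, assuming the
limiting mass-ratio value `μ → k²/(1+k²)` at `ẑ → 0⁻`:
`ν ≤ −1/2`, `1/2 ≤ λ ≤ (1/2)|ẑ|^{−k²}`,
`(1/2)(1−|ẑ|) ≤ r ≤ (1/(2q_k))(1−|ẑ|^{q_k})`, `1 ≤ Ω² ≤ |ẑ|^{−k²}`, and
`0 ≤ m ≤ k²`, on `[-1,0)` (with `q_k = 1 − k²`, `|ẑ| = −ẑ`). -/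
theorem stmt13 (k : ℝ) (r ν lam Ω m ψ : ℝ → ℝ) (h : SSS k r ν lam Ω m ψ)
    (hμ : Filter.Tendsto (fun z => 2 * m z / r z)
      (nhdsWithin 0 (Set.Iio (0 : ℝ))) (nhds (k ^ 2 / (1 + k ^ 2)))) :
    ∀ z ∈ Set.Ico (-1 : ℝ) 0,
      ν z ≤ -(1/2) ∧
      (1/2 ≤ lam z ∧ lam z ≤ (1/2) * (-z) ^ (-(k ^ 2))) ∧
      ((1/2) * (1 - (-z)) ≤ r z ∧
        r z ≤ (1 / (2 * (1 - k ^ 2))) * (1 - (-z) ^ (1 - k ^ 2))) ∧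
      (1 ≤ Ω z ^ 2 ∧ Ω z ^ 2 ≤ (-z) ^ (-(k ^ 2))) ∧
      (0 ≤ m z ∧ m z ≤ k ^ 2) := by
  intro z hz
  exact ⟨h.nu_bound z hz, ⟨h.lam_lower z hz, h.lam_upper z hz⟩,
    ⟨h.r_lower z hz, h.r_upper z hz⟩, ⟨h.Om_sq_lower z hz, h.Om_sq_upper z hz⟩,
    h.m_nonneg z hz, h.m_le hμ z hz⟩
end

section
/- Assume the self-similar ODE system. Then for every ẑ ∈ (-1,0): d/dẑ (|ẑ|^{k²} λ(ẑ)) = −r(ẑ)|ẑ|^{k²} ψ(ẑ)² − 2k|ẑ|^{k²} λ(ẑ) ψ(ẑ), and d/dẑ (|ẑ|^{k²/2} Ω(ẑ)) = −k ψ(ẑ) · |ẑ|^{k²/2} Ω(ẑ). -/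
open Real Set Filter

/-- Monotonicity identities for the weighted quantities:
`d/dẑ (|ẑ|^{k²} λ) = −r|ẑ|^{k²}ψ² − 2k|ẑ|^{k²}λψ` and
`d/dẑ (|ẑ|^{k²/2} Ω) = −kψ · |ẑ|^{k²/2} Ω` on `(-1,0)` (with `|ẑ| = −ẑ`). -/
theorem stmt14 (k : ℝ) (r ν lam Ω m ψ : ℝ → ℝ) (h : SSS k r ν lam Ω m ψ) :
    ∀ z ∈ Set.Ioo (-1 : ℝ) 0,
      HasDerivAt (fun w => (-w) ^ (k ^ 2) * lam w)
        (-(r z * (-z) ^ (k ^ 2) * ψ z ^ 2) - 2 * k * (-z) ^ (k ^ 2) * lam z * ψ z) z ∧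
      HasDerivAt (fun w => (-w) ^ (k ^ 2 / 2) * Ω w)
        (-(k * ψ z) * ((-z) ^ (k ^ 2 / 2) * Ω z)) z := by
  intro z hz
  obtain ⟨hz1, hz0⟩ := hz
  have hznz : z ≠ 0 := ne_of_lt hz0
  have hnz : (0:ℝ) < -z := by linarith
  have hnznz : -z ≠ 0 := ne_of_gt hnz
  have hr := h.r_pos z ⟨hz1, hz0⟩
  have hrz : r z ≠ 0 := ne_of_gt hr
  have hΩpos := h.Ω_pos z ⟨hz1, hz0⟩
  have hΩnz : Ω z ≠ 0 := ne_of_gt hΩpos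
  have e2 := h.eq2 z ⟨hz1, hz0⟩
  have e3 := h.eq3 z ⟨hz1, hz0⟩
  have e4 := h.eq4 z ⟨hz1, hz0⟩
  have e5 := h.eq5 z ⟨hz1, hz0⟩
  have a9 := h.alg9 z ⟨hz1, hz0⟩
  have a10 := h.alg10 z ⟨hz1, hz0⟩
  -- formula for deriv lam
  have hl2 : r z * z * deriv lam z
      = -(r z ^ 2 * z * ψ z ^ 2) - 2 * k * z * lam z * r z * ψ z
        - k ^ 2 * r z * lam z := by linear_combination e2 - a10
  have hl' : deriv lam z
      = -(r z * ψ z ^ 2) - 2 * k * lam z * ψ z - k ^ 2 * lam z / z := by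
    have h2 : deriv lam z = (r z * z * deriv lam z) / (r z * z) := by
      field_simp
    rw [h2, hl2]
    field_simp
  -- formula for deriv Ω
  have hΩ' : deriv Ω z = -(k * ψ z) * Ω z - k ^ 2 * Ω z / (2 * z) := by
    by_cases hlam : lam z ≠ 0
    · have key : 2 * (Ω z)⁻¹ * lam z * deriv Ω z
          = -(2 * k * lam z * ψ z) - k ^ 2 * lam z / z := by
        rw [e5, hl']; ring
      have h2 : deriv Ω z
          = (2 * (Ω z)⁻¹ * lam z * deriv Ω z) * (Ω z / (2 * lam z)) := by
        field_simp
      rw [h2, key]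
      field_simp
    · push_neg at hlam
      have hν : ν z ≠ 0 := by
        intro hν0
        rw [hν0, hlam] at a9
        simp at a9
        exact hrz a9
      have hν2 : r z * deriv ν z
          = -(r z ^ 2 * z * ψ z ^ 2) - 2 * k * z * lam z * r z * ψ z
            - k ^ 2 * r z * lam z := by linear_combination e3 - a10
      have hν' : deriv ν z
          = -(r z * z * ψ z ^ 2) - 2 * k * z * lam z * ψ z - k ^ 2 * lam z := by
        have h2 : deriv ν z = (r z * deriv ν z) / r z := by field_simp
        rw [h2, hν2]
        field_simp
      have key : 2 * (Ω z)⁻¹ * ν z * z * deriv Ω z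
          = -(ν z * (2 * k * z * ψ z + k ^ 2)) := by
        rw [e4, hν']
        have hrνz : r z = z * lam z - ν z := by linarith
        rw [hrνz]; ring
      have h2 : deriv Ω z
          = (2 * (Ω z)⁻¹ * ν z * z * deriv Ω z) * (Ω z / (2 * ν z * z)) := by
        field_simp
      rw [h2, key]
      field_simp
      ring
  -- power function derivatives
  have hpow : ∀ a : ℝ, HasDerivAt (fun w : ℝ => (-w) ^ a)
      (a * (-z) ^ (a - 1) * (-1)) z := by
    intro a
    have h1 : HasDerivAt (fun w : ℝ => -w) (-1) z := (hasDerivAt_id z).neg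
    have h2 := Real.hasDerivAt_rpow_const (x := -z) (p := a) (Or.inl hnznz)
    exact h2.comp z h1
  have hsub : ∀ a : ℝ, (-z : ℝ) ^ (a - 1) = (-z) ^ a / (-z) := by
    intro a
    rw [Real.rpow_sub_one hnznz]
  constructor
  · have hd := (hpow (k ^ 2)).mul (h.diff_lam z ⟨hz1, hz0⟩).hasDerivAt
    refine hd.congr_deriv ?_
    rw [hl', hsub]
    field_simp
    ring
  · have hd := (hpow (k ^ 2 / 2)).mul (h.diff_Ω z ⟨hz1, hz0⟩).hasDerivAt
    refine hd.congr_deriv ?_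
    rw [hΩ', hsub]
    field_simp
    ring
end

section
/- Assume the self-similar ODE system. Then 0 ≤ ψ(ẑ) ≤ k for every ẑ ∈ [-1,-1/2]. -/
open Real Set Filter

/-- Pointwise bound `0 ≤ ψ(ẑ) ≤ k` for `ẑ ∈ [-1,-1/2]`. -/
theorem stmt15 (k : ℝ) (r ν lam Ω m ψ : ℝ → ℝ) (h : SSS k r ν lam Ω m ψ) :
    ∀ z ∈ Set.Icc (-1 : ℝ) (-(1/2)), 0 ≤ ψ z ∧ ψ z ≤ k := by
  
  have hk : 0 < k := h.k_pos
  -- Step 1: lam > 0 on Ioo (-1) 0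
  have hlam : ∀ z ∈ Set.Ioo (-1:ℝ) 0, 0 < lam z := by
    intro z hz
    by_contra hle
    push_neg at hle
    have hsub : Set.Icc (-1:ℝ) z ⊆ Set.Ico (-1:ℝ) 0 := fun x hx =>
      ⟨hx.1, lt_of_le_of_lt hx.2 hz.2⟩
    have hcont : ContinuousOn lam (Set.Icc (-1:ℝ) z) := h.cont_lam.mono hsub
    have h0 : (0:ℝ) ∈ Set.Icc (lam z) (lam (-1)) := by
      rw [h.init_lam]; exact ⟨hle, by norm_num⟩
    obtain ⟨c, hc, hc0⟩ := intermediate_value_Icc' (le_of_lt hz.1) hcont h0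
    have hcIoo : c ∈ Set.Ioo (-1:ℝ) 0 := by
      refine ⟨?_, lt_of_le_of_lt hc.2 hz.2⟩
      rcases eq_or_lt_of_le hc.1 with h1 | h1
      · exfalso; rw [← h1, h.init_lam] at hc0; norm_num at hc0
      · exact h1
    have h10 := h.alg10 c hcIoo
    have hΩ := h.Ω_pos c hcIoo
    rw [hc0] at h10
    nlinarith [sq_nonneg (r c * ψ c), hcIoo.2, mul_pos hΩ hΩ]
  -- derivative of r^2 * ψ
  have hFd : ∀ z ∈ Set.Ioo (-1:ℝ) 0,
      HasDerivAt (fun x => r x ^ 2 * ψ x) (-(k * lam z * r z / z)) z := by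
    intro z hz
    have hr : HasDerivAt r (lam z) z := by
      have := (h.diff_r z hz).hasDerivAt
      rwa [h.eq1 z hz] at this
    have hψ : HasDerivAt ψ (deriv ψ z) z := (h.diff_ψ z hz).hasDerivAt
    have hD := (hr.fun_pow 2).fun_mul hψ
    refine hD.congr_deriv (Eq.symm ?_)
    have h6 := h.eq6 z hz
    have hz0 : z ≠ 0 := ne_of_lt hz.2
    have hrz : r z ≠ 0 := ne_of_gt (h.r_pos z hz)
    field_simp
    linear_combination -(r z) * h6
  -- derivative of r^2 * (k - ψ)
  have hGd : ∀ z ∈ Set.Ioo (-1:ℝ) 0,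
      HasDerivAt (fun x => r x ^ 2 * (k - ψ x))
        (k * lam z * r z * (2 * z + 1) / z) z := by
    intro z hz
    have hr : HasDerivAt r (lam z) z := by
      have := (h.diff_r z hz).hasDerivAt
      rwa [h.eq1 z hz] at this
    have hψ : HasDerivAt ψ (deriv ψ z) z := (h.diff_ψ z hz).hasDerivAt
    have hD := (hr.fun_pow 2).fun_mul ((hasDerivAt_const z k).fun_sub hψ)
    refine hD.congr_deriv (Eq.symm ?_)
    have h6 := h.eq6 z hz
    have hz0 : z ≠ 0 := ne_of_lt hz.2
    have hrz : r z ≠ 0 := ne_of_gt (h.r_pos z hz)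
    field_simp
    linear_combination r z * h6
  intro b hb
  rcases eq_or_lt_of_le hb.1 with h1 | h1
  · rw [← h1, h.init_ψ]
    constructor <;> linarith
  have hbIoo : b ∈ Set.Ioo (-1:ℝ) 0 := ⟨h1, by linarith [hb.2]⟩
  have hsub : Set.Icc (-1:ℝ) b ⊆ Set.Ico (-1:ℝ) 0 := fun x hx =>
    ⟨hx.1, lt_of_le_of_lt hx.2 hbIoo.2⟩
  have hsub2 : Set.Ioo (-1:ℝ) b ⊆ Set.Ioo (-1:ℝ) 0 := fun x hx =>
    ⟨hx.1, lt_trans hx.2 hbIoo.2⟩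
  have hm1 : (-1:ℝ) ∈ Set.Icc (-1:ℝ) b := ⟨le_refl _, le_of_lt h1⟩
  have hbm : b ∈ Set.Icc (-1:ℝ) b := ⟨le_of_lt h1, le_refl _⟩
  have hrb := h.r_pos b hbIoo
  constructor
  · -- ψ b ≥ 0 via monotonicity of r^2 ψ
    have hFmono : MonotoneOn (fun x => r x ^ 2 * ψ x) (Set.Icc (-1:ℝ) b) := by
      apply monotoneOn_of_deriv_nonneg (convex_Icc _ _)
      · exact ((h.cont_r.mono hsub).pow 2).mul (h.cont_ψ.mono hsub)
      · rw [interior_Icc]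
        intro x hx
        exact ((hFd x (hsub2 hx)).differentiableAt).differentiableWithinAt
      · rw [interior_Icc]
        intro x hx
        rw [(hFd x (hsub2 hx)).deriv]
        have hl := hlam x (hsub2 hx)
        have hrx := h.r_pos x (hsub2 hx)
        have hx0 : x < 0 := lt_trans hx.2 hbIoo.2
        have : k * lam x * r x / x ≤ 0 := by
          apply div_nonpos_of_nonneg_of_nonpos
          · positivity
          · exact le_of_lt hx0
        linarith
    have hF := hFmono hm1 hbm (le_of_lt h1)
    simp only [h.init_r] at hF
    norm_num at hF
    nlinarith [hF, mul_pos hrb hrb]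
  · -- ψ b ≤ k via monotonicity of r^2 (k - ψ)
    have hGmono : MonotoneOn (fun x => r x ^ 2 * (k - ψ x)) (Set.Icc (-1:ℝ) b) := by
      apply monotoneOn_of_deriv_nonneg (convex_Icc _ _)
      · exact ((h.cont_r.mono hsub).pow 2).mul
          (continuousOn_const.sub (h.cont_ψ.mono hsub))
      · rw [interior_Icc]
        intro x hx
        exact ((hGd x (hsub2 hx)).differentiableAt).differentiableWithinAt
      · rw [interior_Icc]
        intro x hx
        rw [(hGd x (hsub2 hx)).deriv]
        have hl := hlam x (hsub2 hx)
        have hrx := h.r_pos x (hsub2 hx)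
        have hx0 : x < 0 := lt_trans hx.2 hbIoo.2
        have hx12 : x < -(1/2) := lt_of_lt_of_le hx.2 hb.2
        rw [div_nonneg_iff]
        right
        constructor
        · nlinarith [mul_pos (mul_pos hk hl) hrx, hx12]
        · exact le_of_lt hx0
    have hG := hGmono hm1 hbm (le_of_lt h1)
    simp only [h.init_r] at hG
    norm_num at hG
    nlinarith [hG, mul_pos hrb hrb]
end
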